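/- arXiv:2101.07247 — 2 statements merged into one kernel-verified Lean document; each statement's English description precedes it below -/
import Mathlib

section
/- There exists a connected graph G such that every direction of G is countably determined in G, but G itself is not countably determined; moreover the end space of G is compact and first countable at every end, but not separable (hence neither second countable nor metrisable). Such a G is obtained from the infinite binary tree T₂ by adding, for each rooted ray R of T₂, a disjoint new ray R′ whose first vertex is joined to all vertices of R. -/
/-! Common definitions: rays, ends (à la Halin), the end space, directions
(via Mathlib's `SimpleGraph.end`), domination, generalised paths, etc. -/

open Classical SimpleGraph

universe u

variable {V : Type u}

/-- A ray in `G`: a one-way infinite path. -/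
structure Ray (G : SimpleGraph V) where
  f : ℕ → V
  inj : Function.Injective f
  adj : ∀ n, G.Adj (f n) (f (n + 1))

namespace Ray

variable {G : SimpleGraph V}

/-- `R` has a tail inside the vertex set `S`. -/
def TailIn (R : Ray G) (S : Set V) : Prop :=
  ∃ N, ∀ n, N ≤ n → R.f n ∈ S

/-- The set of the first `n` vertices of `R`. -/
noncomputable def initSeg (R : Ray G) (n : ℕ) : Finset V :=
  (Finset.range n).image R.f

end Ray

/-- Two rays are equivalent if no finite vertex set separates them, i.e. for
every finite `X` they have tails in a common component of `G - X`. -/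
def RayEquiv (G : SimpleGraph V) (R S : Ray G) : Prop :=
  ∀ X : Finset V, ∃ C : G.ComponentCompl (X : Set V), R.TailIn C ∧ S.TailIn C

/-- The ends of `G` in the sense of Halin: equivalence classes of rays. -/
def Ends (G : SimpleGraph V) : Type u :=
  { ω : Set (Ray G) // ∃ R : Ray G, ω = { S | RayEquiv G R S } }

/-- The end of a ray. -/
def Ray.end (G : SimpleGraph V) (R : Ray G) : Ends G :=
  ⟨{ S | RayEquiv G R S }, R, rfl⟩

/-- The end `ω` lives in the component `C` of `G - X`:  every ray in `ω` has a
tail in `C`.  (For genuine ends this is the statement `C = C(X,ω)`.) -/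
def LivesIn {G : SimpleGraph V} (ω : Ends G) (X : Finset V)
    (C : G.ComponentCompl (X : Set V)) : Prop :=
  ∀ R ∈ ω.1, R.TailIn C

/-- The basic open set `Ω(X,C)` of the end space. -/
def basicSet (G : SimpleGraph V) (X : Finset V) (C : G.ComponentCompl (X : Set V)) :
    Set (Ends G) :=
  { ω | LivesIn ω X C }

/-- The end space: the topology on `Ends G` generated by the sets `Ω(X,C)`. -/
instance endsTopology (G : SimpleGraph V) : TopologicalSpace (Ends G) :=
  TopologicalSpace.generateFrom
    { U | ∃ (X : Finset V) (C : G.ComponentCompl (X : Set V)), U = basicSet G X C }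

section Directions

/-- The component `f(X)` chosen by the direction `f` at the finite vertex set `X`. -/
def dirComp {G : SimpleGraph V} (f : G.end) (X : Finset V) : G.ComponentCompl (X : Set V) :=
  f.1 (Opposite.op X)


variable (G : SimpleGraph V)

/-- The ray `R` induces the direction `f` (i.e. `f = f_ω` for the end `ω` of `R`):
for every finite `X`, the component `f(X)` contains a tail of `R`. -/
def InducesDir {G : SimpleGraph V} (R : Ray G) (f : G.end) : Prop :=
  ∀ X : Finset V, R.TailIn (dirComp f X : Set V)

/-- The end `ω` induces the direction `f`, i.e. `f = f_ω`. -/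
def EndInducesDir {G : SimpleGraph V} (ω : Ends G) (f : G.end) : Prop :=
  ∀ (X : Finset V), ∀ R ∈ ω.1, R.TailIn (dirComp f X : Set V)

/-- A direction `f` is countably determined in `G` if some countable set of
directional choices `(X, C)` distinguishes `f` from every other direction. -/
def DirCountablyDetermined {G : SimpleGraph V} (f : G.end) : Prop :=
  ∃ D : Set ((X : Finset V) × G.ComponentCompl (X : Set V)), D.Countable ∧
    ∀ h : G.end, h ≠ f → ∃ p ∈ D,
      dirComp f p.1 = p.2 ∧ dirComp h p.1 ≠ p.2

/-- `G` is countably determined: some countable set of directional choices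
distinguishes every two distinct directions of `G` from each other. -/
def GraphCountablyDetermined (G : SimpleGraph V) : Prop :=
  ∃ D : Set ((X : Finset V) × G.ComponentCompl (X : Set V)), D.Countable ∧
    ∀ f h : G.end, f ≠ h → ∃ p ∈ D,
      (dirComp f p.1 = p.2 ∧ dirComp h p.1 ≠ p.2) ∨
      (dirComp h p.1 = p.2 ∧ dirComp f p.1 ≠ p.2)

/-- `R` is directional in `G`: the directional choices given by the finite
initial segments of `R` distinguish the direction induced by `R` from every
other direction of `G`. -/
def Directional {G : SimpleGraph V} (R : Ray G) : Prop :=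
  ∀ h : G.end, (∃ X : Finset V, ¬ R.TailIn (dirComp h X : Set V)) →
    ∃ n : ℕ, ¬ R.TailIn (dirComp h (R.initSeg n) : Set V)

/-- `R` is topological in `G`: the basic open sets `Ω(X_n, ω)`, for `X_n` the
first `n` vertices of `R` and `ω` the end of `R`, form a neighbourhood base at
`ω` in the end space of `G`. -/
def Topological {G : SimpleGraph V} (R : Ray G) : Prop :=
  ∀ U : Set (Ends G), IsOpen U → R.end G ∈ U →
    ∃ (n : ℕ) (C : G.ComponentCompl (R.initSeg n : Set V)),
      LivesIn (R.end G) (R.initSeg n) C ∧ basicSet G (R.initSeg n) C ⊆ U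

end Directions

section Domination

variable (G : SimpleGraph V)

/-- `v` dominates the ray `R`: no finite vertex set avoiding `v` separates `v`
from `R` (equivalently, there is an infinite `v`–`R` fan). -/
def DominatesRay (v : V) (R : Ray G) : Prop :=
  ∀ X : Finset V, v ∉ X → ∃ (u : V) (W : G.Walk v u),
    (∃ n, R.f n = u) ∧ ∀ w ∈ W.support, w ∉ (X : Set V)

/-- `v` dominates the end `ω`. -/
def DominatesEnd (v : V) (ω : Ends G) : Prop :=
  ∀ R ∈ ω.1, DominatesRay G v R

end Domination

/-- A double ray in `G`. -/
structure DoubleRay (G : SimpleGraph V) where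
  f : ℤ → V
  inj : Function.Injective f
  adj : ∀ n : ℤ, G.Adj (f n) (f (n + 1))

namespace DoubleRay

variable {G : SimpleGraph V}

/-- The positive tail of `D` lies in the end `ω`. -/
def PosTailIn (D : DoubleRay G) (ω : Ends G) : Prop :=
  ∃ R ∈ ω.1, ∃ N : ℤ, ∀ n : ℕ, R.f n = D.f (N + n)

/-- The negative tail of `D` lies in the end `ω`. -/
def NegTailIn (D : DoubleRay G) (ω : Ends G) : Prop :=
  ∃ R ∈ ω.1, ∃ N : ℤ, ∀ n : ℕ, R.f n = D.f (N - n)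

end DoubleRay

/-- `P` is (the vertex set of) a generalised path in `G` with endpoints
`ω₁ ≠ ω₂`. -/
def IsGenPath (G : SimpleGraph V) (P : Set V) (ω₁ ω₂ : Ends G) : Prop :=
  (∃ D : DoubleRay G, P = Set.range D.f ∧
    ((D.PosTailIn ω₁ ∧ D.NegTailIn ω₂) ∨ (D.PosTailIn ω₂ ∧ D.NegTailIn ω₁))) ∨
  (∃ (u v : V) (W : G.Walk u v), W.IsPath ∧ P = { x | x ∈ W.support } ∧
    ((DominatesEnd G u ω₁ ∧ DominatesEnd G v ω₂) ∨
     (DominatesEnd G u ω₂ ∧ DominatesEnd G v ω₁))) ∨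
  (∃ R : Ray G, P = Set.range R.f ∧
    ((R ∈ ω₁.1 ∧ DominatesEnd G (R.f 0) ω₂) ∨
     (R ∈ ω₂.1 ∧ DominatesEnd G (R.f 0) ω₁)))

/-- A sun in `G` centred at `ω`: pairwise vertex-disjoint generalised paths
`(P i, {ω, leaf i})` with pairwise distinct leaves `leaf i ≠ ω`, where either
all the `P i` are double rays with one tail in `leaf i` and another in `ω`, or
all the `P i` are rays in `leaf i` whose first vertices dominate `ω`. -/
def IsSun (G : SimpleGraph V) (ω : Ends G) {I : Type*}
    (P : I → Set V) (leaf : I → Ends G) : Prop :=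
  (∀ i j, i ≠ j → Disjoint (P i) (P j)) ∧ Function.Injective leaf ∧
  (∀ i, leaf i ≠ ω) ∧
  ((∀ i, ∃ D : DoubleRay G, P i = Set.range D.f ∧
      ((D.PosTailIn (leaf i) ∧ D.NegTailIn ω) ∨
       (D.PosTailIn ω ∧ D.NegTailIn (leaf i)))) ∨
   (∀ i, ∃ R : Ray G, P i = Set.range R.f ∧ R ∈ (leaf i).1 ∧
      DominatesEnd G (R.f 0) ω))


/-- The first `n` values of `σ` as a list: the `n`-th vertex of the rooted ray
of the binary tree corresponding to `σ`. -/
def pre2 (σ : ℕ → Bool) : ℕ → List Bool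
  | 0 => []
  | n + 1 => pre2 σ n ++ [σ n]

lemma pre2_length (σ : ℕ → Bool) (n : ℕ) : (pre2 σ n).length = n := by
  induction n with
  | zero => rfl
  | succ n ih => simp [pre2, ih]

/-- Vertices: the binary tree `T₂` (finite 0-1 sequences) together with, for
every rooted ray `σ` of `T₂`, the vertices `(σ, n)` of the new ray `R'_σ`. -/
abbrev BTV : Type := List Bool ⊕ ((ℕ → Bool) × ℕ)

/-- Edges: tree edges of `T₂`; ray edges of each `R'_σ`; and the first vertex
`(σ, 0)` of `R'_σ` joined to every vertex of the rooted ray `R_σ`. -/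
def btRel : BTV → BTV → Prop := fun x y =>
  (∃ (s : List Bool) (b : Bool), x = Sum.inl s ∧ y = Sum.inl (s ++ [b])) ∨
  (∃ (σ : ℕ → Bool) (n : ℕ), x = Sum.inr (σ, n) ∧ y = Sum.inr (σ, n + 1)) ∨
  (∃ (σ : ℕ → Bool) (n : ℕ), x = Sum.inr (σ, 0) ∧ y = Sum.inl (pre2 σ n))

/-- The graph of Example 4.1. -/
def GBT : SimpleGraph BTV := SimpleGraph.fromRel btRel



/-! ### Auxiliary infrastructure -/

section AuxGeneric

open SimpleGraph

variable {G : SimpleGraph V}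

/-- Reachability within a set of vertices. -/
inductive ReachIn (G : SimpleGraph V) (W : Set V) : V → V → Prop
  | refl {a : V} (h : a ∈ W) : ReachIn G W a a
  | tail {a b c : V} (hab : ReachIn G W a b) (hbc : G.Adj b c) (hc : c ∈ W) : ReachIn G W a c

namespace ReachIn

lemma mem_left {W : Set V} {a b : V} (h : ReachIn G W a b) : a ∈ W := by
  induction h with
  | refl h => exact h
  | tail _ _ _ ih => exact ih

lemma mem_right {W : Set V} {a b : V} (h : ReachIn G W a b) : b ∈ W := by
  induction h with
  | refl h => exact h
  | tail _ _ hc _ => exact hc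

lemma trans {W : Set V} {a b c : V} (h1 : ReachIn G W a b) (h2 : ReachIn G W b c) :
    ReachIn G W a c := by
  induction h2 with
  | refl _ => exact h1
  | tail _ hbc hc ih => exact .tail ih hbc hc

lemma symm {W : Set V} {a b : V} (h : ReachIn G W a b) : ReachIn G W b a := by
  induction h with
  | refl h => exact .refl h
  | @tail b c hab hbc hc ih =>
    exact ReachIn.trans (.tail (.refl hc) hbc.symm hab.mem_right) ih

lemma mono {W W' : Set V} (hWW' : W ⊆ W') {a b : V} (h : ReachIn G W a b) :
    ReachIn G W' a b := by
  induction h with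
  | refl h => exact .refl (hWW' h)
  | tail _ hbc hc ih => exact .tail ih hbc (hWW' hc)

lemma reachable {W : Set V} {a b : V} (h : ReachIn G W a b) : G.Reachable a b := by
  induction h with
  | refl _ => exact .refl _
  | tail _ hbc _ ih => exact ih.trans hbc.reachable

lemma mem_comp {K W : Set V} (hWK : ∀ w ∈ W, w ∉ K) {C : G.ComponentCompl K} {a b : V}
    (ha : a ∈ C) (h : ReachIn G W a b) : b ∈ C := by
  induction h with
  | refl _ => exact ha
  | tail _ hbc hc ih => exact ComponentCompl.mem_of_adj _ _ ih (hWK _ hc) hbc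

end ReachIn

lemma comp_walk_closed {K W : Set V} (hcl : ∀ a ∈ W, ∀ b, G.Adj a b → b ∈ W ∪ K) :
    ∀ {a b : ↥(Kᶜ)} (_ : (G.induce Kᶜ).Walk a b), (a : V) ∈ W → (b : V) ∈ W := by
  intro a b p
  induction p with
  | nil => exact id
  | @cons u v w h p ih =>
    intro hu
    refine ih ?_
    rcases hcl _ hu _ h with hv | hv
    · exact hv
    · exact absurd hv v.prop

lemma comp_subset_of_closed {K W : Set V} (hcl : ∀ a ∈ W, ∀ b, G.Adj a b → b ∈ W ∪ K)
    {v : V} (hv : v ∈ W) {C : G.ComponentCompl K} (hC : v ∈ C) : (C : Set V) ⊆ W := by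
  intro u hu
  obtain ⟨huK, he⟩ := hu
  obtain ⟨hvK, he'⟩ := hC
  have : G.componentComplMk huK = G.componentComplMk hvK := he.trans he'.symm
  rw [SimpleGraph.ConnectedComponent.eq] at this
  obtain ⟨p⟩ := this.symm
  exact comp_walk_closed hcl p hv

lemma comp_eq_set {K W : Set V} (hWK : ∀ w ∈ W, w ∉ K)
    (hconn : ∀ a ∈ W, ∀ b ∈ W, ReachIn G W a b)
    (hcl : ∀ a ∈ W, ∀ b, G.Adj a b → b ∈ W ∪ K)
    {v : V} (hv : v ∈ W) {C : G.ComponentCompl K} (hC : v ∈ C) : (C : Set V) = W :=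
  subset_antisymm (comp_subset_of_closed hcl hv hC)
    (fun u hu => ReachIn.mem_comp hWK hC (hconn v hv u hu))

lemma comp_eq_of_mem {K : Set V} {C D : G.ComponentCompl K} {v : V}
    (h1 : v ∈ C) (h2 : v ∈ D) : C = D := by
  obtain ⟨h, e⟩ := h1
  obtain ⟨h', e'⟩ := h2
  rw [← e, ← e']

lemma mem_coe {K : Set V} {C : G.ComponentCompl K} {v : V} (h : v ∈ C) :
    v ∈ (C : Set V) := h

lemma of_mem_coe {K : Set V} {C : G.ComponentCompl K} {v : V} (h : v ∈ (C : Set V)) :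
    v ∈ C := h

lemma dirComp_hom (f : G.end) {X Y : Finset V} (hXY : X ⊆ Y) :
    (dirComp f Y).hom hXY = dirComp f X :=
  f.2 ((CategoryTheory.homOfLE hXY).op)

lemma dirComp_subset (f : G.end) {X Y : Finset V} (hXY : X ⊆ Y) :
    (dirComp f Y : Set V) ⊆ (dirComp f X : Set V) := by
  rw [← dirComp_hom f hXY]
  exact SimpleGraph.ComponentCompl.subset_hom _ _

lemma end_ext {f g : G.end} (h : ∀ X : Finset V, dirComp f X = dirComp g X) : f = g :=
  Subtype.ext (funext fun K => h K.unop)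

lemma dirComp_nonempty (f : G.end) (X : Finset V) : ((dirComp f X : G.ComponentCompl X) : Set V).Nonempty :=
  SimpleGraph.ComponentCompl.nonempty _

/-- The trapping manoeuvre. -/
lemma dir_trap {f : G.end} {X Y : Finset V} {W : Set V}
    (hWX : ∀ w ∈ W, w ∉ (↑X : Set V)) (hWY : ∀ w ∈ W, w ∉ (↑Y : Set V))
    (hconn : ∀ a ∈ W, ∀ b ∈ W, ReachIn G W a b)
    (hcl : ∀ a ∈ W, ∀ b, G.Adj a b → b ∈ W ∪ (↑Y : Set V))
    {w : V} (hw : w ∈ W) (hfY : w ∈ dirComp f Y) : w ∈ dirComp f X := by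
  classical
  have hW : ∀ v ∈ W, v ∉ (↑(X ∪ Y) : Set V) := by
    intro v hv hcon
    rcases Finset.mem_union.mp (Finset.mem_coe.mp hcon) with h | h
    exacts [hWX v hv (Finset.mem_coe.mpr h), hWY v hv (Finset.mem_coe.mpr h)]
  have hYset : ((dirComp f Y : G.ComponentCompl (Y : Set V)) : Set V) = W :=
    comp_eq_set hWY hconn hcl hw hfY
  obtain ⟨u, hu⟩ := dirComp_nonempty f (X ∪ Y)
  have hu' : u ∈ W := hYset.subset (dirComp_subset f Finset.subset_union_right hu)
  have hwZ : w ∈ dirComp f (X ∪ Y) :=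
    ReachIn.mem_comp hW (of_mem_coe hu) (hconn u hu' w hw)
  exact of_mem_coe (dirComp_subset f Finset.subset_union_left (mem_coe hwZ))

/-- A "spine": a one-way infinite chain of adjacent vertices that eventually leaves
every finite set. -/
structure IsSpine (G : SimpleGraph V) (c : ℕ → V) : Prop where
  adj : ∀ n, G.Adj (c n) (c (n + 1))
  escape : ∀ X : Finset V, ∃ N, ∀ n, N ≤ n → c n ∉ (X : Set V)

namespace IsSpine

variable {c : ℕ → V}

/-- The tail of a spine from index `N` on. -/
def tailSet (c : ℕ → V) (N : ℕ) : Set V := {v | ∃ n, N ≤ n ∧ v = c n}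

lemma reach (hc : IsSpine G c) (N : ℕ) : ∀ n, N ≤ n → ReachIn G (tailSet c N) (c N) (c n) := by
  intro n hn
  induction n with
  | zero =>
    have : N = 0 := Nat.le_zero.mp hn
    subst this
    exact .refl ⟨0, le_rfl, rfl⟩
  | succ n ih =>
    rcases Nat.lt_or_ge N (n+1) with h | h
    · have hNn : N ≤ n := Nat.lt_succ_iff.mp h
      exact .tail (ih hNn) (hc.adj n) ⟨n+1, by omega, rfl⟩
    · have : N = n + 1 := le_antisymm hn h
      subst this
      exact .refl ⟨n+1, le_rfl, rfl⟩

lemma mk_eq_mk_of_tail (hc : IsSpine G c) {X : Finset V} {N : ℕ}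
    (hN : ∀ n, N ≤ n → c n ∉ (X : Set V)) {M : ℕ} (hM : N ≤ M) :
    G.componentComplMk (hN N le_rfl) = G.componentComplMk (hN M hM) :=
  comp_eq_of_mem
    (ReachIn.mem_comp (fun w hw => hw.choose_spec.2 ▸ hN _ hw.choose_spec.1)
      (G.componentComplMk_mem _) (hc.reach N M hM))
    (G.componentComplMk_mem _)

noncomputable def N (hc : IsSpine G c) (X : Finset V) : ℕ := (hc.escape X).choose

lemma N_spec (hc : IsSpine G c) (X : Finset V) :
    ∀ n, hc.N X ≤ n → c n ∉ (X : Set V) := (hc.escape X).choose_spec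

lemma tail_not_mem (hc : IsSpine G c) (X : Finset V) :
    ∀ w ∈ tailSet c (hc.N X), w ∉ (X : Set V) := by
  rintro w ⟨n, hn, rfl⟩
  exact hc.N_spec X n hn

/-- The direction induced by a spine. -/
noncomputable def dir (hc : IsSpine G c) : G.end := by
  refine ⟨fun K => G.componentComplMk (v := c (hc.N K.unop)) (hc.N_spec K.unop _ le_rfl), ?_⟩
  rintro K L φ
  have hXY : L.unop ⊆ K.unop := CategoryTheory.le_of_op_hom φ
  change (G.componentComplMk _).hom hXY = G.componentComplMk _
  rw [SimpleGraph.ComponentCompl.hom_mk]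
  set X := L.unop
  set Y := K.unop
  set M := max (hc.N X) (hc.N Y) with hM
  have e1 := hc.mk_eq_mk_of_tail (hc.N_spec X) (M := M) (le_max_left _ _)
  have e2 := hc.mk_eq_mk_of_tail
    (fun n hn => Set.notMem_subset hXY (hc.N_spec Y n hn)) (M := M) (le_max_right _ _)
  exact e2.trans e1.symm
  exact_mod_cast hXY

lemma dir_mem (hc : IsSpine G c) (X : Finset V) :
    ∀ n, hc.N X ≤ n → c n ∈ dirComp hc.dir X := by
  intro n hn
  show c n ∈ (G.componentComplMk (hc.N_spec X _ le_rfl) : G.ComponentCompl (X : Set V))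
  rw [hc.mk_eq_mk_of_tail (hc.N_spec X) hn]
  exact G.componentComplMk_mem _

end IsSpine

end AuxGeneric

section AuxBT

open SimpleGraph

/-! #### `pre2` lemmas -/

lemma pre2_succ (σ : ℕ → Bool) (n : ℕ) : pre2 σ (n + 1) = pre2 σ n ++ [σ n] := rfl

lemma pre2_take (σ : ℕ → Bool) {m n : ℕ} (h : m ≤ n) : (pre2 σ n).take m = pre2 σ m := by
  induction n with
  | zero =>
    have : m = 0 := Nat.le_zero.mp h
    subst this; rfl
  | succ n ih =>
    rcases Nat.lt_or_ge m (n + 1) with h' | h'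
    · have hm : m ≤ n := Nat.lt_succ_iff.mp h'
      rw [pre2_succ, List.take_append_of_le_length (by rw [pre2_length]; exact hm), ih hm]
    · have h2 := List.take_length (l := pre2 σ (n + 1))
      rw [pre2_length] at h2
      have : m = n + 1 := le_antisymm h h'
      subst this
      exact h2

lemma pre2_prefix (σ : ℕ → Bool) {m n : ℕ} (h : m ≤ n) : pre2 σ m <+: pre2 σ n := by
  rw [← pre2_take σ h]; exact List.take_prefix _ _

lemma prefix_pre2 {σ : ℕ → Bool} {t : List Bool} {n : ℕ} (h : t <+: pre2 σ n) :
    t = pre2 σ t.length := by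
  have hlen : t.length ≤ n := by
    have := h.length_le
    rwa [pre2_length] at this
  conv_lhs => rw [List.prefix_iff_eq_take.mp h]
  rw [pre2_take σ hlen]

lemma pre2_eq_iff {σ τ : ℕ → Bool} {n : ℕ} (h : pre2 σ n = pre2 τ n) {k : ℕ} (hk : k < n) :
    σ k = τ k := by
  induction n with
  | zero => omega
  | succ n ih =>
    rw [pre2_succ, pre2_succ] at h
    obtain ⟨h1, h2⟩ := List.append_inj' h rfl
    rcases Nat.lt_or_ge k n with h' | h'
    · exact ih h1 h'
    · have : k = n := by omega
      subst this
      exact List.head_eq_of_cons_eq h2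

/-! #### Adjacency lemmas for `GBT` -/

lemma adj_tree (s : List Bool) (b : Bool) : GBT.Adj (Sum.inl s) (Sum.inl (s ++ [b])) := by
  rw [GBT, SimpleGraph.fromRel_adj]
  exact ⟨by simp, Or.inl (Or.inl ⟨s, b, rfl, rfl⟩)⟩

lemma adj_ray (σ : ℕ → Bool) (n : ℕ) : GBT.Adj (Sum.inr (σ, n)) (Sum.inr (σ, n + 1)) := by
  rw [GBT, SimpleGraph.fromRel_adj]
  exact ⟨by simp, Or.inl (Or.inr (Or.inl ⟨σ, n, rfl, rfl⟩))⟩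

lemma adj_spoke (σ : ℕ → Bool) (n : ℕ) : GBT.Adj (Sum.inr (σ, 0)) (Sum.inl (pre2 σ n)) := by
  rw [GBT, SimpleGraph.fromRel_adj]
  exact ⟨by simp, Or.inl (Or.inr (Or.inr ⟨σ, n, rfl, rfl⟩))⟩

lemma adj_inr_cases {σ : ℕ → Bool} {n : ℕ} {y : BTV} (h : GBT.Adj (Sum.inr (σ, n)) y) :
    y = Sum.inr (σ, n + 1) ∨ (∃ m, n = m + 1 ∧ y = Sum.inr (σ, m)) ∨
      (n = 0 ∧ ∃ m, y = Sum.inl (pre2 σ m)) := by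
  rw [GBT, SimpleGraph.fromRel_adj] at h
  obtain ⟨-, h | h⟩ := h
  · rcases h with ⟨s, b, hx, hy⟩ | ⟨τ, m, hx, hy⟩ | ⟨τ, m, hx, hy⟩
    · exact absurd hx (by simp)
    · rw [Sum.inr.injEq, Prod.mk.injEq] at hx
      obtain ⟨rfl, rfl⟩ := hx
      exact Or.inl hy
    · rw [Sum.inr.injEq, Prod.mk.injEq] at hx
      obtain ⟨rfl, rfl⟩ := hx
      exact Or.inr (Or.inr ⟨rfl, m, hy⟩)
  · rcases h with ⟨s, b, hx, hy⟩ | ⟨τ, m, hx, hy⟩ | ⟨τ, m, hx, hy⟩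
    · exact absurd hy (by simp)
    · rw [Sum.inr.injEq, Prod.mk.injEq] at hy
      obtain ⟨rfl, hm⟩ := hy
      exact Or.inr (Or.inl ⟨m, hm, hx⟩)
    · exact absurd hy (by simp)

lemma adj_inl_cases {t : List Bool} {y : BTV} (h : GBT.Adj (Sum.inl t) y) :
    (∃ b, y = Sum.inl (t ++ [b])) ∨ (∃ s b, t = s ++ [b] ∧ y = Sum.inl s) ∨
      (∃ σ m, t = pre2 σ m ∧ y = Sum.inr (σ, 0)) := by
  rw [GBT, SimpleGraph.fromRel_adj] at h
  obtain ⟨-, h | h⟩ := h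
  · rcases h with ⟨s, b, hx, hy⟩ | ⟨τ, m, hx, hy⟩ | ⟨τ, m, hx, hy⟩
    · rw [Sum.inl.injEq] at hx
      subst hx
      exact Or.inl ⟨b, hy⟩
    · exact absurd hx (by simp)
    · exact absurd hx (by simp)
  · rcases h with ⟨s, b, hx, hy⟩ | ⟨τ, m, hx, hy⟩ | ⟨τ, m, hx, hy⟩
    · rw [Sum.inl.injEq] at hy
      subst hy
      exact Or.inr (Or.inl ⟨s, b, rfl, hx⟩)
    · exact absurd hy (by simp)
    · rw [Sum.inl.injEq] at hy
      subst hy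
      exact Or.inr (Or.inr ⟨τ, m, rfl, hx⟩)

/-! #### Cones, pruned cones and ray tails -/

/-- The cone above the tree vertex `s`. -/
def cone (s : List Bool) : Set BTV :=
  {v | match v with
       | Sum.inl t => s <+: t
       | Sum.inr (τ, _) => pre2 τ s.length = s}

/-- The cone above `s`, with the ray belonging to `σ` removed. -/
def cone' (s : List Bool) (σ : ℕ → Bool) : Set BTV :=
  {v | match v with
       | Sum.inl t => s <+: t
       | Sum.inr (τ, _) => pre2 τ s.length = s ∧ τ ≠ σ}

/-- The tail of the ray `R'_σ` beyond index `m`. -/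
def rtail (σ : ℕ → Bool) (m : ℕ) : Set BTV := {v | ∃ j, m < j ∧ v = Sum.inr (σ, j)}

@[simp] lemma mem_cone_inl {s t : List Bool} : Sum.inl t ∈ cone s ↔ s <+: t := Iff.rfl

@[simp] lemma mem_cone_inr {s : List Bool} {τ : ℕ → Bool} {j : ℕ} :
    Sum.inr (τ, j) ∈ cone s ↔ pre2 τ s.length = s := Iff.rfl

@[simp] lemma mem_cone'_inl {s t : List Bool} {σ : ℕ → Bool} :
    Sum.inl t ∈ cone' s σ ↔ s <+: t := Iff.rfl

@[simp] lemma mem_cone'_inr {s : List Bool} {σ τ : ℕ → Bool} {j : ℕ} :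
    Sum.inr (τ, j) ∈ cone' s σ ↔ pre2 τ s.length = s ∧ τ ≠ σ := Iff.rfl

/-- The proper prefixes of `s`, as a finite separator. -/
noncomputable def Qfin (s : List Bool) : Finset BTV :=
  (Finset.range s.length).image (fun k => Sum.inl (s.take k))

/-- The separator consisting of the first `m+2` prefixes of `σ` and the
first `m+1` vertices of `R'_σ`. -/
noncomputable def Yfin (σ : ℕ → Bool) (m : ℕ) : Finset BTV :=
  ((Finset.range (m + 2)).image fun k => Sum.inl (pre2 σ k)) ∪
    ((Finset.range (m + 1)).image fun k => Sum.inr (σ, k))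

lemma mem_Qfin {s : List Bool} {v : BTV} :
    v ∈ Qfin s ↔ ∃ k, k < s.length ∧ v = Sum.inl (s.take k) := by
  simp only [Qfin, Finset.mem_image, Finset.mem_range]
  exact ⟨fun ⟨k, hk, h⟩ => ⟨k, hk, h.symm⟩, fun ⟨k, hk, h⟩ => ⟨k, hk, h.symm⟩⟩

lemma mem_Yfin {σ : ℕ → Bool} {m : ℕ} {v : BTV} :
    v ∈ Yfin σ m ↔ (∃ k, k < m + 2 ∧ v = Sum.inl (pre2 σ k)) ∨
      (∃ k, k < m + 1 ∧ v = Sum.inr (σ, k)) := by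
  simp only [Yfin, Finset.mem_union, Finset.mem_image, Finset.mem_range]
  constructor
  · rintro (⟨k, hk, h⟩ | ⟨k, hk, h⟩)
    exacts [Or.inl ⟨k, hk, h.symm⟩, Or.inr ⟨k, hk, h.symm⟩]
  · rintro (⟨k, hk, h⟩ | ⟨k, hk, h⟩)
    exacts [Or.inl ⟨k, hk, h.symm⟩, Or.inr ⟨k, hk, h.symm⟩]

lemma Qfin_pre2_subset_Yfin {σ : ℕ → Bool} {m : ℕ} :
    Qfin (pre2 σ (m + 2)) ⊆ Yfin σ m := by
  intro v hv
  obtain ⟨k, hk, rfl⟩ := mem_Qfin.mp hv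
  rw [pre2_length] at hk
  rw [pre2_take σ hk.le]
  exact mem_Yfin.mpr (Or.inl ⟨k, hk, rfl⟩)

lemma spoke_mem_Yfin {σ : ℕ → Bool} {m : ℕ} : Sum.inr (σ, 0) ∈ Yfin σ m :=
  mem_Yfin.mpr (Or.inr ⟨0, by omega, rfl⟩)

lemma Yfin_mono {σ : ℕ → Bool} {m m' : ℕ} (h : m ≤ m') : Yfin σ m ⊆ Yfin σ m' := by
  intro v hv
  rcases mem_Yfin.mp hv with ⟨k, hk, rfl⟩ | ⟨k, hk, rfl⟩
  exacts [mem_Yfin.mpr (Or.inl ⟨k, by omega, rfl⟩), mem_Yfin.mpr (Or.inr ⟨k, by omega, rfl⟩)]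

/-! #### Closure properties -/

lemma cone_closed {s : List Bool} :
    ∀ a ∈ cone s, ∀ b, GBT.Adj a b → b ∈ cone s ∪ (↑(Qfin s) : Set BTV) := by
  rintro (t | ⟨τ, n⟩) ha y hadj
  · rcases adj_inl_cases hadj with ⟨b, rfl⟩ | ⟨s', b, rfl, rfl⟩ | ⟨σ', m, rfl, rfl⟩
    · exact Or.inl (ha.trans (List.prefix_append _ _))
    · rcases Nat.lt_or_ge s'.length s.length with h' | h'
      · -- then s = s' ++ [b] (prefix of equal or longer length)
        have hlen : s.length = s'.length + 1 := by
          have h1 := ha.length_le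
          rw [List.length_append, List.length_singleton] at h1
          omega
        have hs : s = s' ++ [b] := ha.eq_of_length (by rw [hlen, List.length_append]; rfl)
        refine Or.inr (Finset.mem_coe.mpr (mem_Qfin.mpr ⟨s'.length, by omega, ?_⟩))
        rw [hs, List.take_left']
        rfl
      · refine Or.inl (mem_cone_inl.mpr ?_)
        have := List.prefix_iff_eq_take.mp ha
        rw [List.take_append_of_le_length h'] at this
        rw [this]
        exact List.take_prefix _ _
    · refine Or.inl (mem_cone_inr.mpr ?_)
      exact (prefix_pre2 ha).symm
  · rcases adj_inr_cases hadj with rfl | ⟨m, rfl, rfl⟩ | ⟨rfl, m, rfl⟩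
    · exact Or.inl ha
    · exact Or.inl ha
    · rcases Nat.lt_or_ge m s.length with h' | h'
      · refine Or.inr (Finset.mem_coe.mpr (mem_Qfin.mpr ⟨m, h', ?_⟩))
        rw [← ha, pre2_take τ h'.le]
      · refine Or.inl (mem_cone_inl.mpr ?_)
        rw [← ha]
        exact pre2_prefix τ h'

lemma cone'_closed {s : List Bool} {σ : ℕ → Bool} :
    ∀ a ∈ cone' s σ, ∀ b, GBT.Adj a b →
      b ∈ cone' s σ ∪ ((↑(Qfin s) : Set BTV) ∪ {Sum.inr (σ, 0)}) := by
  rintro (t | ⟨τ, n⟩) ha y hadj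
  · rcases adj_inl_cases hadj with ⟨b, rfl⟩ | ⟨s', b, rfl, rfl⟩ | ⟨σ', m, rfl, rfl⟩
    · exact Or.inl (ha.trans (List.prefix_append _ _))
    · rcases Nat.lt_or_ge s'.length s.length with h' | h'
      · have hlen : s.length = s'.length + 1 := by
          have h1 := ha.length_le
          rw [List.length_append, List.length_singleton] at h1
          omega
        have hs : s = s' ++ [b] := ha.eq_of_length (by rw [hlen, List.length_append]; rfl)
        refine Or.inr (Or.inl (Finset.mem_coe.mpr (mem_Qfin.mpr ⟨s'.length, by omega, ?_⟩)))
        rw [hs, List.take_left']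
        rfl
      · refine Or.inl (mem_cone'_inl.mpr ?_)
        have := List.prefix_iff_eq_take.mp ha
        rw [List.take_append_of_le_length h'] at this
        rw [this]
        exact List.take_prefix _ _
    · by_cases hσ : σ' = σ
      · subst hσ
        exact Or.inr (Or.inr rfl)
      · exact Or.inl (mem_cone'_inr.mpr ⟨(prefix_pre2 ha).symm, hσ⟩)
  · obtain ⟨hτ, hτσ⟩ := ha
    rcases adj_inr_cases hadj with rfl | ⟨m, rfl, rfl⟩ | ⟨rfl, m, rfl⟩
    · exact Or.inl ⟨hτ, hτσ⟩
    · exact Or.inl ⟨hτ, hτσ⟩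
    · rcases Nat.lt_or_ge m s.length with h' | h'
      · refine Or.inr (Or.inl (Finset.mem_coe.mpr (mem_Qfin.mpr ⟨m, h', ?_⟩)))
        rw [← hτ, pre2_take τ h'.le]
      · refine Or.inl (mem_cone'_inl.mpr ?_)
        rw [← hτ]
        exact pre2_prefix τ h'

lemma rtail_closed {σ : ℕ → Bool} {m : ℕ} :
    ∀ a ∈ rtail σ m, ∀ b, GBT.Adj a b → b ∈ rtail σ m ∪ {Sum.inr (σ, m)} := by
  rintro a ⟨j, hj, rfl⟩ y hadj
  rcases adj_inr_cases hadj with rfl | ⟨k, hk, rfl⟩ | ⟨h0, -⟩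
  · exact Or.inl ⟨j + 1, by omega, rfl⟩
  · rcases Nat.lt_or_ge m k with h' | h'
    · exact Or.inl ⟨k, h', rfl⟩
    · have : k = m := by omega
      subst this
      exact Or.inr rfl
  · omega

/-! #### Reachability within the pieces -/

lemma cone_reach {s : List Bool} : ∀ v ∈ cone s, ReachIn GBT (cone s) (Sum.inl s) v := by
  have base : (Sum.inl s : BTV) ∈ cone s := mem_cone_inl.mpr (List.prefix_refl s)
  have tree : ∀ u : List Bool, ReachIn GBT (cone s) (Sum.inl s) (Sum.inl (s ++ u)) := by
    intro u
    induction u using List.reverseRecOn with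
    | nil =>
      rw [List.append_nil]
      exact .refl base
    | append_singleton u b ih =>
      have : (s ++ u) ++ [b] = s ++ (u ++ [b]) := by rw [List.append_assoc]
      refine .tail ih (this ▸ adj_tree (s ++ u) b) ?_
      exact mem_cone_inl.mpr ⟨u ++ [b], rfl⟩
  rintro (t | ⟨τ, n⟩) hv
  · obtain ⟨u, rfl⟩ := hv
    exact tree u
  · have hτ : pre2 τ s.length = s := hv
    have hmem : ∀ j, (Sum.inr (τ, j) : BTV) ∈ cone s := fun j => hτ
    have h0 : ReachIn GBT (cone s) (Sum.inl s) (Sum.inr (τ, 0)) := by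
      refine .tail (.refl base) ?_ (hmem 0)
      exact (hτ ▸ adj_spoke τ s.length).symm
    clear hv
    induction n with
    | zero => exact h0
    | succ n ih => exact .tail ih (adj_ray τ n) (hmem (n + 1))

lemma cone'_reach {s : List Bool} {σ : ℕ → Bool} :
    ∀ v ∈ cone' s σ, ReachIn GBT (cone' s σ) (Sum.inl s) v := by
  have base : (Sum.inl s : BTV) ∈ cone' s σ := mem_cone'_inl.mpr (List.prefix_refl s)
  have tree : ∀ u : List Bool, ReachIn GBT (cone' s σ) (Sum.inl s) (Sum.inl (s ++ u)) := by
    intro u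
    induction u using List.reverseRecOn with
    | nil =>
      rw [List.append_nil]
      exact .refl base
    | append_singleton u b ih =>
      have : (s ++ u) ++ [b] = s ++ (u ++ [b]) := by rw [List.append_assoc]
      refine .tail ih (this ▸ adj_tree (s ++ u) b) ?_
      exact mem_cone'_inl.mpr ⟨u ++ [b], rfl⟩
  rintro (t | ⟨τ, n⟩) hv
  · obtain ⟨u, rfl⟩ := hv
    exact tree u
  · obtain ⟨hτ, hτσ⟩ := hv
    have hmem : ∀ j, (Sum.inr (τ, j) : BTV) ∈ cone' s σ := fun j => ⟨hτ, hτσ⟩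
    have h0 : ReachIn GBT (cone' s σ) (Sum.inl s) (Sum.inr (τ, 0)) := by
      refine .tail (.refl base) ?_ (hmem 0)
      exact (hτ ▸ adj_spoke τ s.length).symm
    induction n with
    | zero => exact h0
    | succ n ih => exact .tail ih (adj_ray τ n) (hmem (n + 1))

lemma rtail_reach {σ : ℕ → Bool} {m : ℕ} :
    ∀ v ∈ rtail σ m, ReachIn GBT (rtail σ m) (Sum.inr (σ, m + 1)) v := by
  have key : ∀ j, m < j → ReachIn GBT (rtail σ m) (Sum.inr (σ, m + 1)) (Sum.inr (σ, j)) := by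
    intro j
    induction j with
    | zero => exact fun h => absurd h (by omega)
    | succ j ih =>
      intro hj
      rcases Nat.lt_or_ge m j with h' | h'
      · exact .tail (ih h') (adj_ray σ j) ⟨j + 1, by omega, rfl⟩
      · have hjm : j = m := by omega
        rw [hjm]
        exact .refl ⟨m + 1, by omega, rfl⟩
  rintro v ⟨j, hj, rfl⟩
  exact key j hj

/-! #### Connectivity of `GBT` -/

lemma mem_cone_nil (v : BTV) : v ∈ cone [] := by
  rcases v with t | ⟨τ, n⟩
  · exact mem_cone_inl.mpr (List.nil_prefix)
  · rfl

lemma GBT_connected : GBT.Connected := by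
  rw [SimpleGraph.connected_iff]
  refine ⟨fun u v => ?_, ⟨Sum.inl []⟩⟩
  have hu := (cone_reach u (mem_cone_nil u)).reachable
  have hv := (cone_reach v (mem_cone_nil v)).reachable
  exact hu.symm.trans hv

lemma cone_child {s : List Bool} {v : BTV} (hv : v ∈ cone s) (hne : v ≠ Sum.inl s) :
    ∃ b, v ∈ cone (s ++ [b]) := by
  rcases v with t | ⟨τ, n⟩
  · obtain ⟨u, rfl⟩ := hv
    cases u with
    | nil => exact absurd (by simp) hne
    | cons b u' =>
      refine ⟨b, mem_cone_inl.mpr ⟨u', ?_⟩⟩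
      simp
  · refine ⟨τ s.length, mem_cone_inr.mpr ?_⟩
    have hτ : pre2 τ s.length = s := hv
    rw [List.length_append, List.length_singleton, pre2_succ, hτ]

lemma Qfin_child (s : List Bool) (b : Bool) :
    Qfin (s ++ [b]) = insert (Sum.inl s) (Qfin s) := by
  ext v
  rw [mem_Qfin, Finset.mem_insert, mem_Qfin]
  constructor
  · rintro ⟨k, hk, rfl⟩
    rw [List.length_append, List.length_singleton] at hk
    rcases Nat.lt_or_ge k s.length with h' | h'
    · exact Or.inr ⟨k, h', by rw [List.take_append_of_le_length h'.le]⟩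
    · have : k = s.length := by omega
      subst this
      rw [List.take_left' rfl]
      exact Or.inl rfl
  · rintro (rfl | ⟨k, hk, rfl⟩)
    · exact ⟨s.length, by rw [List.length_append, List.length_singleton]; omega,
        by rw [List.take_left' rfl]⟩
    · exact ⟨k, by rw [List.length_append, List.length_singleton]; omega,
        by rw [List.take_append_of_le_length hk.le]⟩

end AuxBT

section AuxTrace

open SimpleGraph

/-! #### Full-component identifications -/

lemma cone_disj_Qfin {s : List Bool} : ∀ w ∈ cone s, w ∉ (↑(Qfin s) : Set BTV) := by
  intro w hw hwQ
  obtain ⟨k, hk, rfl⟩ := mem_Qfin.mp (Finset.mem_coe.mp hwQ)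
  have h1 : s.length ≤ (s.take k).length := (mem_cone_inl.mp hw).length_le
  rw [List.length_take] at h1
  omega

lemma cone_conn {s : List Bool} : ∀ a ∈ cone s, ∀ b ∈ cone s, ReachIn GBT (cone s) a b :=
  fun a ha b hb => (cone_reach a ha).symm.trans (cone_reach b hb)

lemma cone'_conn {s : List Bool} {σ : ℕ → Bool} :
    ∀ a ∈ cone' s σ, ∀ b ∈ cone' s σ, ReachIn GBT (cone' s σ) a b :=
  fun a ha b hb => (cone'_reach a ha).symm.trans (cone'_reach b hb)

lemma rtail_conn {σ : ℕ → Bool} {m : ℕ} :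
    ∀ a ∈ rtail σ m, ∀ b ∈ rtail σ m, ReachIn GBT (rtail σ m) a b :=
  fun a ha b hb => (rtail_reach a ha).symm.trans (rtail_reach b hb)

lemma cone_comp_eq {s : List Bool} {C : GBT.ComponentCompl (↑(Qfin s) : Set BTV)}
    (hC : Sum.inl s ∈ C) : (C : Set BTV) = cone s :=
  comp_eq_set cone_disj_Qfin cone_conn cone_closed (mem_cone_inl.mpr (List.prefix_refl s)) hC

lemma cone'_disj_Yfin {σ : ℕ → Bool} {m : ℕ} :
    ∀ w ∈ cone' (pre2 σ (m + 2)) σ, w ∉ (↑(Yfin σ m) : Set BTV) := by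
  intro w hw hwY
  rcases mem_Yfin.mp (Finset.mem_coe.mp hwY) with ⟨k, hk, rfl⟩ | ⟨k, hk, rfl⟩
  · have h1 : (pre2 σ (m + 2)).length ≤ (pre2 σ k).length := (mem_cone'_inl.mp hw).length_le
    rw [pre2_length, pre2_length] at h1
    omega
  · exact (mem_cone'_inr.mp hw).2 rfl

lemma rtail_disj_Yfin {σ : ℕ → Bool} {m : ℕ} :
    ∀ w ∈ rtail σ m, w ∉ (↑(Yfin σ m) : Set BTV) := by
  rintro w ⟨j, hj, rfl⟩ hwY
  rcases mem_Yfin.mp (Finset.mem_coe.mp hwY) with ⟨k, hk, he⟩ | ⟨k, hk, he⟩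
  · exact absurd he (by simp)
  · rw [Sum.inr.injEq, Prod.mk.injEq] at he
    omega

lemma rtail_closed_Yfin {σ : ℕ → Bool} {m : ℕ} :
    ∀ a ∈ rtail σ m, ∀ b, GBT.Adj a b → b ∈ rtail σ m ∪ (↑(Yfin σ m) : Set BTV) := by
  intro a ha b hab
  rcases rtail_closed a ha b hab with h | h
  · exact Or.inl h
  · exact Or.inr (Finset.mem_coe.mpr (h ▸ mem_Yfin.mpr (Or.inr ⟨m, by omega, rfl⟩)))

lemma cone'_closed_Yfin {σ : ℕ → Bool} {m : ℕ} :
    ∀ a ∈ cone' (pre2 σ (m + 2)) σ, ∀ b, GBT.Adj a b →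
      b ∈ cone' (pre2 σ (m + 2)) σ ∪ (↑(Yfin σ m) : Set BTV) := by
  intro a ha b hab
  rcases cone'_closed a ha b hab with h | h | h
  · exact Or.inl h
  · exact Or.inr (Qfin_pre2_subset_Yfin (Finset.mem_coe.mp h))
  · rw [Set.mem_singleton_iff] at h
    rw [h]
    exact Or.inr (Finset.mem_coe.mpr spoke_mem_Yfin)

lemma rtail_comp_eq {σ : ℕ → Bool} {m : ℕ} {C : GBT.ComponentCompl (↑(Yfin σ m) : Set BTV)}
    (hC : Sum.inr (σ, m + 1) ∈ C) : (C : Set BTV) = rtail σ m :=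
  comp_eq_set rtail_disj_Yfin rtail_conn rtail_closed_Yfin ⟨m + 1, by omega, rfl⟩ hC

lemma cone'_comp_eq {σ : ℕ → Bool} {m : ℕ} {C : GBT.ComponentCompl (↑(Yfin σ m) : Set BTV)}
    (hC : Sum.inl (pre2 σ (m + 2)) ∈ C) : (C : Set BTV) = cone' (pre2 σ (m + 2)) σ :=
  comp_eq_set cone'_disj_Yfin cone'_conn cone'_closed_Yfin
    (mem_cone'_inl.mpr (List.prefix_refl _)) hC

/-! #### Choosing a separator level avoiding a given finite set -/

open Classical in
lemma exists_big (X : Finset BTV) (σ : ℕ → Bool) :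
    ∃ m₀, ∀ m, m₀ ≤ m →
      (∀ w ∈ cone' (pre2 σ (m + 2)) σ, w ∉ (X : Set BTV)) ∧
      (∀ w ∈ rtail σ m, w ∉ (X : Set BTV)) := by
  classical
  set g : BTV → ℕ := fun v => match v with
    | Sum.inl t => t.length
    | Sum.inr (τ, j) => if h : τ = σ then j else Nat.find (Function.ne_iff.mp h) + 1
    with hg
  refine ⟨X.sup g, fun m hm => ⟨?_, ?_⟩⟩
  · intro w hw hwX
    have hle : g w ≤ m := le_trans (Finset.le_sup (Finset.mem_coe.mp hwX)) hm
    rcases w with t | ⟨τ, j⟩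
    · have h1 : (pre2 σ (m + 2)).length ≤ t.length := (mem_cone'_inl.mp hw).length_le
      rw [pre2_length] at h1
      have : g (Sum.inl t) = t.length := rfl
      omega
    · obtain ⟨hτ, hτσ⟩ := mem_cone'_inr.mp hw
      rw [pre2_length] at hτ
      have hgw : g (Sum.inr (τ, j)) = Nat.find (Function.ne_iff.mp hτσ) + 1 := by
        simp only [hg, dif_neg hτσ]
      have hfind := Nat.find_spec (Function.ne_iff.mp hτσ)
      have : Nat.find (Function.ne_iff.mp hτσ) < m + 2 := by omega
      exact hfind (pre2_eq_iff hτ this)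
  · rintro w ⟨j, hj, rfl⟩ hwX
    have hle : g (Sum.inr (σ, j)) ≤ m := le_trans (Finset.le_sup (Finset.mem_coe.mp hwX)) hm
    have : g (Sum.inr (σ, j)) = j := by simp [hg]
    omega

/-! #### The trace of a direction -/

lemma dirComp_Qfin_nil (f : GBT.end) : Sum.inl [] ∈ dirComp f (Qfin []) := by
  obtain ⟨v, hv⟩ := dirComp_nonempty f (Qfin [])
  refine ReachIn.mem_comp (W := cone []) ?_ hv ((cone_reach v (mem_cone_nil v)).symm)
  intro w _ hw
  obtain ⟨k, hk, -⟩ := mem_Qfin.mp (Finset.mem_coe.mp hw)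
  simp at hk

lemma dirComp_Qfin_child (f : GBT.end) {s : List Bool}
    (hs : Sum.inl s ∈ dirComp f (Qfin s)) :
    ∃ b, Sum.inl (s ++ [b]) ∈ dirComp f (Qfin (s ++ [b])) := by
  classical
  set Q' : Finset BTV := insert (Sum.inl s) (Qfin s) with hQ'
  obtain ⟨v, hv⟩ := dirComp_nonempty f Q'
  have h1 : v ∈ ((dirComp f (Qfin s) : GBT.ComponentCompl _) : Set BTV) :=
    dirComp_subset f (Finset.subset_insert _ _) hv
  have hvs : v ∈ cone s := (cone_comp_eq hs).subset h1
  have hvQ : v ∉ (↑Q' : Set BTV) := ComponentCompl.notMem_of_mem (of_mem_coe hv)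
  have hvne : v ≠ Sum.inl s := fun he => hvQ (by rw [he]; exact Finset.mem_insert_self _ _)
  obtain ⟨b, hb⟩ := cone_child hvs hvne
  refine ⟨b, ?_⟩
  have hQeq : Qfin (s ++ [b]) = Q' := Qfin_child s b
  have hdisj : ∀ w ∈ cone (s ++ [b]), w ∉ (↑Q' : Set BTV) := by
    intro w hw hcon
    refine cone_disj_Qfin w hw ?_
    rw [hQeq]
    exact hcon
  have hcl : ∀ a ∈ cone (s ++ [b]), ∀ c, GBT.Adj a c →
      c ∈ cone (s ++ [b]) ∪ (↑Q' : Set BTV) := by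
    intro a ha c hac
    rcases cone_closed a ha c hac with h | h
    · exact Or.inl h
    · refine Or.inr ?_
      rw [← hQeq]
      exact h
  have hset : ((dirComp f Q' : GBT.ComponentCompl _) : Set BTV) = cone (s ++ [b]) :=
    comp_eq_set hdisj cone_conn hcl hb (of_mem_coe hv)
  show Sum.inl (s ++ [b]) ∈ dirComp f (Qfin (s ++ [b]))
  rw [hQeq]
  exact of_mem_coe (hset.symm.subset (mem_cone_inl.mpr (List.prefix_refl _)))

noncomputable def traceAux (f : GBT.end) : ℕ → {s : List Bool // Sum.inl s ∈ dirComp f (Qfin s)}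
  | 0 => ⟨[], dirComp_Qfin_nil f⟩
  | n + 1 => ⟨(traceAux f n).1 ++ [(dirComp_Qfin_child f (traceAux f n).2).choose],
      (dirComp_Qfin_child f (traceAux f n).2).choose_spec⟩

noncomputable def traceσ (f : GBT.end) : ℕ → Bool :=
  fun n => (dirComp_Qfin_child f (traceAux f n).2).choose

lemma traceAux_eq (f : GBT.end) : ∀ n, (traceAux f n).1 = pre2 (traceσ f) n
  | 0 => rfl
  | n + 1 => by
    show (traceAux f n).1 ++ [traceσ f n] = pre2 (traceσ f) n ++ [traceσ f n]
    rw [traceAux_eq f n]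

lemma trace_mem (f : GBT.end) (n : ℕ) :
    Sum.inl (pre2 (traceσ f) n) ∈ dirComp f (Qfin (pre2 (traceσ f) n)) := by
  have := (traceAux f n).2
  rwa [traceAux_eq f n] at this

/-! #### The dichotomy -/

lemma dichotomy (f : GBT.end) :
    (∀ m, Sum.inr (traceσ f, m + 1) ∈ dirComp f (Yfin (traceσ f) m)) ∨
    (∀ m, Sum.inl (pre2 (traceσ f) (m + 2)) ∈ dirComp f (Yfin (traceσ f) m)) := by
  set σ := traceσ f with hσ
  have perm : ∀ m, Sum.inr (σ, m + 1) ∈ dirComp f (Yfin σ m) ∨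
      Sum.inl (pre2 σ (m + 2)) ∈ dirComp f (Yfin σ m) := by
    intro m
    obtain ⟨z, hz⟩ := dirComp_nonempty f (Yfin σ m)
    have hzQ : z ∈ cone (pre2 σ (m + 2)) :=
      (cone_comp_eq (trace_mem f (m + 2))).subset
        (dirComp_subset f Qfin_pre2_subset_Yfin hz)
    have hzY : z ∉ (↑(Yfin σ m) : Set BTV) := ComponentCompl.notMem_of_mem (of_mem_coe hz)
    rcases z with t | ⟨τ, j⟩
    · right
      exact ReachIn.mem_comp cone'_disj_Yfin hz
        ((cone'_reach _ (mem_cone'_inl.mpr (mem_cone_inl.mp hzQ))).symm)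
    · by_cases hτ : τ = σ
      · subst hτ
        left
        have hj : m < j := by
          by_contra hj
          exact hzY (Finset.mem_coe.mpr (mem_Yfin.mpr (Or.inr ⟨j, by omega, rfl⟩)))
        exact ReachIn.mem_comp rtail_disj_Yfin hz ((rtail_reach _ ⟨j, hj, rfl⟩).symm)
      · right
        have hmem : Sum.inr (τ, j) ∈ cone' (pre2 σ (m + 2)) σ :=
          mem_cone'_inr.mpr ⟨mem_cone_inr.mp hzQ, hτ⟩
        exact ReachIn.mem_comp cone'_disj_Yfin hz ((cone'_reach _ hmem).symm)
  by_cases hA : ∀ m, Sum.inr (σ, m + 1) ∈ dirComp f (Yfin σ m)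
  · exact Or.inl hA
  · push_neg at hA
    obtain ⟨m₀, hm₀⟩ := hA
    refine Or.inr fun m => ?_
    rcases perm m with h | h
    · exfalso
      have hB₀ : Sum.inl (pre2 σ (m₀ + 2)) ∈ dirComp f (Yfin σ m₀) := (perm m₀).resolve_left hm₀
      rcases le_total m m₀ with hmm | hmm
      · have hsub : Sum.inl (pre2 σ (m₀ + 2)) ∈ rtail σ m :=
          (rtail_comp_eq h).subset (dirComp_subset f (Yfin_mono hmm) (mem_coe hB₀))
        obtain ⟨j, -, habs⟩ := hsub
        exact absurd habs (by simp)
      · have hsub : Sum.inr (σ, m + 1) ∈ cone' (pre2 σ (m₀ + 2)) σ :=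
          (cone'_comp_eq hB₀).subset (dirComp_subset f (Yfin_mono hmm) (mem_coe h))
        exact (mem_cone'_inr.mp hsub).2 rfl
    · exact h

/-! #### Agreement on the `Yfin` separators determines a direction -/

lemma eq_of_agree_on_Yfin {f h : GBT.end}
    (hag : ∀ m, dirComp h (Yfin (traceσ f) m) = dirComp f (Yfin (traceσ f) m)) : h = f := by
  set σ := traceσ f with hσ
  apply end_ext
  intro X
  obtain ⟨m₀, hm₀⟩ := exists_big X σ
  rcases dichotomy f with hA | hB
  · rw [← hσ] at hA
    have hdis := (hm₀ m₀ le_rfl).2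
    have hw : Sum.inr (σ, m₀ + 1) ∈ rtail σ m₀ := ⟨m₀ + 1, by omega, rfl⟩
    have h1 : Sum.inr (σ, m₀ + 1) ∈ dirComp h X :=
      dir_trap hdis rtail_disj_Yfin rtail_conn rtail_closed_Yfin hw
        (by rw [hag m₀]; exact hA m₀)
    have h2 : Sum.inr (σ, m₀ + 1) ∈ dirComp f X :=
      dir_trap hdis rtail_disj_Yfin rtail_conn rtail_closed_Yfin hw (hA m₀)
    exact comp_eq_of_mem h1 h2
  · rw [← hσ] at hB
    have hdis := (hm₀ m₀ le_rfl).1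
    have hw : Sum.inl (pre2 σ (m₀ + 2)) ∈ cone' (pre2 σ (m₀ + 2)) σ :=
      mem_cone'_inl.mpr (List.prefix_refl _)
    have h1 : Sum.inl (pre2 σ (m₀ + 2)) ∈ dirComp h X :=
      dir_trap hdis cone'_disj_Yfin cone'_conn cone'_closed_Yfin hw
        (by rw [hag m₀]; exact hB m₀)
    have h2 : Sum.inl (pre2 σ (m₀ + 2)) ∈ dirComp f X :=
      dir_trap hdis cone'_disj_Yfin cone'_conn cone'_closed_Yfin hw (hB m₀)
    exact comp_eq_of_mem h1 h2

theorem dir_countably_determined (f : GBT.end) : DirCountablyDetermined f := by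
  refine ⟨Set.range (fun m : ℕ =>
    (⟨Yfin (traceσ f) m, dirComp f (Yfin (traceσ f) m)⟩ :
      (X : Finset BTV) × GBT.ComponentCompl (X : Set BTV))), Set.countable_range _, ?_⟩
  intro h hne
  by_contra hcon
  push_neg at hcon
  refine hne (eq_of_agree_on_Yfin fun m => ?_)
  have := hcon ⟨Yfin (traceσ f) m, dirComp f (Yfin (traceσ f) m)⟩ ⟨m, rfl⟩
  by_contra hb
  exact hb (this rfl)

end AuxTrace

section AuxNotCD

open SimpleGraph

/-- The weight of a vertex, used to find escape levels. -/
def vwt : BTV → ℕ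
  | Sum.inl t => t.length
  | Sum.inr (_, j) => j

lemma treeSpine_isSpine (σ : ℕ → Bool) : IsSpine GBT (fun n => Sum.inl (pre2 σ n)) := by
  constructor
  · intro n
    rw [pre2_succ]
    exact adj_tree (pre2 σ n) (σ n)
  · intro X
    refine ⟨X.sup vwt + 1, fun n hn hmem => ?_⟩
    have := Finset.le_sup (f := vwt) (Finset.mem_coe.mp hmem)
    have hv : vwt (Sum.inl (pre2 σ n)) = n := pre2_length σ n
    omega

lemma raySpine_isSpine (σ : ℕ → Bool) : IsSpine GBT (fun n => Sum.inr (σ, n)) := by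
  constructor
  · intro n
    exact adj_ray σ n
  · intro X
    refine ⟨X.sup vwt + 1, fun n hn hmem => ?_⟩
    have := Finset.le_sup (f := vwt) (Finset.mem_coe.mp hmem)
    have hv : vwt (Sum.inr (σ, n)) = n := rfl
    omega

/-- The direction of the tree end `ω_σ`. -/
noncomputable def fdir (σ : ℕ → Bool) : GBT.end := (treeSpine_isSpine σ).dir

/-- The direction of the added-ray end `η_σ`. -/
noncomputable def gdir (σ : ℕ → Bool) : GBT.end := (raySpine_isSpine σ).dir

lemma rtail0_comp_eq {σ : ℕ → Bool} {X₀ : Finset BTV} (hX₀ : X₀ = {Sum.inr (σ, 0)})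
    {C : GBT.ComponentCompl (X₀ : Set BTV)} {k : ℕ} (hk : 0 < k)
    (hC : Sum.inr (σ, k) ∈ C) : (C : Set BTV) = rtail σ 0 := by
  subst hX₀
  refine comp_eq_set ?_ rtail_conn ?_ ⟨k, hk, rfl⟩ hC
  · rintro w ⟨j, hj, rfl⟩ hmem
    rw [Finset.coe_singleton, Set.mem_singleton_iff, Sum.inr.injEq, Prod.mk.injEq] at hmem
    omega
  · intro a ha b hab
    rcases rtail_closed a ha b hab with hb | hb
    · exact Or.inl hb
    · rw [Set.mem_singleton_iff] at hb
      exact Or.inr (by rw [hb]; simp)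

lemma fdir_ne_gdir (σ : ℕ → Bool) : fdir σ ≠ gdir σ := by
  intro hfg
  classical
  set X₀ : Finset BTV := {Sum.inr (σ, 0)} with hX₀
  set hg := raySpine_isSpine σ
  set hf := treeSpine_isSpine σ
  set k := max (hg.N X₀) 1 with hk
  have hmemg : Sum.inr (σ, k) ∈ dirComp (gdir σ) X₀ := hg.dir_mem X₀ k (le_max_left _ _)
  have hset : ((dirComp (gdir σ) X₀ : GBT.ComponentCompl _) : Set BTV) = rtail σ 0 :=
    rtail0_comp_eq hX₀ (by omega) hmemg
  have hmemf : Sum.inl (pre2 σ (hf.N X₀)) ∈ dirComp (fdir σ) X₀ := hf.dir_mem X₀ _ le_rfl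
  rw [hfg] at hmemf
  have : Sum.inl (pre2 σ (hf.N X₀)) ∈ rtail σ 0 := hset.subset (mem_coe hmemf)
  obtain ⟨j, -, habs⟩ := this
  exact absurd habs (by simp)

lemma dirComp_eq_of_unmentioned (σ : ℕ → Bool) (X : Finset BTV)
    (hX : ∀ j, Sum.inr (σ, j) ∉ X) :
    dirComp (fdir σ) X = dirComp (gdir σ) X := by
  classical
  set hf := treeSpine_isSpine σ
  set hg := raySpine_isSpine σ
  set W : Set BTV := insert (Sum.inl (pre2 σ (hf.N X))) {v | ∃ j, v = Sum.inr (σ, j)} with hW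
  have hWX : ∀ w ∈ W, w ∉ (X : Set BTV) := by
    rintro w (rfl | ⟨j, rfl⟩)
    · exact hf.N_spec X _ le_rfl
    · exact fun hc => hX j (Finset.mem_coe.mp hc)
  have hbase : (Sum.inl (pre2 σ (hf.N X)) : BTV) ∈ W := Set.mem_insert _ _
  have hreach : ∀ j, ReachIn GBT W (Sum.inl (pre2 σ (hf.N X))) (Sum.inr (σ, j)) := by
    intro j
    induction j with
    | zero =>
      exact .tail (.refl hbase) (adj_spoke σ (hf.N X)).symm (Set.mem_insert_iff.mpr (Or.inr ⟨0, rfl⟩))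
    | succ j ih =>
      exact .tail ih (adj_ray σ j) (Set.mem_insert_iff.mpr (Or.inr ⟨j + 1, rfl⟩))
  have h1 : Sum.inl (pre2 σ (hf.N X)) ∈ dirComp (fdir σ) X := hf.dir_mem X _ le_rfl
  have h2 : Sum.inr (σ, hg.N X) ∈ dirComp (fdir σ) X :=
    ReachIn.mem_comp hWX h1 (hreach (hg.N X))
  have h3 : Sum.inr (σ, hg.N X) ∈ dirComp (gdir σ) X := hg.dir_mem X _ le_rfl
  exact comp_eq_of_mem h2 h3

lemma funBool_uncountable : ¬ (Set.univ : Set (ℕ → Bool)).Countable := by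
  intro h
  haveI : Countable (ℕ → Bool) := Set.countable_univ_iff.mp h
  obtain ⟨e, he⟩ := exists_surjective_nat (ℕ → Bool)
  obtain ⟨n, hn⟩ := he (fun k => !(e k k))
  have := congrFun hn n
  simp at this

theorem not_graph_cd : ¬ GraphCountablyDetermined GBT := by
  rintro ⟨D, hDc, hD⟩
  classical
  set M : Set (ℕ → Bool) := ⋃ p ∈ D, {σ : ℕ → Bool | ∃ j, Sum.inr (σ, j) ∈ p.1} with hM
  have hMc : M.Countable := by
    refine Set.Countable.biUnion hDc (fun p _ => Set.Finite.countable ?_)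
    have hsub : {σ : ℕ → Bool | ∃ j, Sum.inr (σ, j) ∈ p.1} ⊆
        (fun v : BTV => match v with
          | Sum.inl _ => (fun _ => false : ℕ → Bool)
          | Sum.inr (τ, _) => τ) '' ↑p.1 := by
      rintro σ ⟨j, hj⟩
      exact ⟨Sum.inr (σ, j), hj, rfl⟩
    exact (p.1.finite_toSet.image _).subset hsub
  have hex : ∃ σ : ℕ → Bool, σ ∉ M := by
    by_contra hall
    push_neg at hall
    exact funBool_uncountable (hMc.mono fun σ _ => hall σ)
  obtain ⟨σ, hσ⟩ := hex
  obtain ⟨p, hp, hcase⟩ := hD (fdir σ) (gdir σ) (fdir_ne_gdir σ)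
  have hXσ : ∀ j, Sum.inr (σ, j) ∉ p.1 := by
    intro j hj
    exact hσ (Set.mem_biUnion hp ⟨j, hj⟩)
  have heq := dirComp_eq_of_unmentioned σ p.1 hXσ
  rcases hcase with ⟨h1, h2⟩ | ⟨h1, h2⟩
  · exact h2 (heq.symm.trans h1)
  · exact h2 (heq.trans h1)

end AuxNotCD

section AuxEnds

open SimpleGraph

variable {G : SimpleGraph V}

lemma ray_isSpine (R : Ray G) : IsSpine G R.f := by
  refine ⟨R.adj, fun X => ?_⟩
  have hfin : {n : ℕ | R.f n ∈ (X : Set V)}.Finite :=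
    Set.Finite.preimage (Set.injOn_of_injective R.inj) X.finite_toSet
  obtain ⟨N, hN⟩ := hfin.bddAbove
  exact ⟨N + 1, fun n hn hmem => by have := hN hmem; omega⟩

/-- The direction induced by a ray. -/
noncomputable def rayDir (R : Ray G) : G.end := (ray_isSpine R).dir

lemma rayDir_tailIn (R : Ray G) (X : Finset V) :
    R.TailIn ((dirComp (rayDir R) X : G.ComponentCompl (X : Set V)) : Set V) :=
  ⟨(ray_isSpine R).N X, fun n hn => mem_coe ((ray_isSpine R).dir_mem X n hn)⟩

lemma tailIn_mono {R : Ray G} {S T : Set V} (h : R.TailIn S) (hST : S ⊆ T) : R.TailIn T := by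
  obtain ⟨N, hN⟩ := h
  exact ⟨N, fun n hn => hST (hN n hn)⟩

lemma rayEquiv_refl (R : Ray G) : RayEquiv G R R := fun X =>
  ⟨dirComp (rayDir R) X, rayDir_tailIn R X, rayDir_tailIn R X⟩

lemma tailIn_of_equiv {R S : Ray G} (h : RayEquiv G R S) {X : Finset V}
    {C : G.ComponentCompl (X : Set V)} (hR : R.TailIn (C : Set V)) : S.TailIn (C : Set V) := by
  obtain ⟨C', hRC', hSC'⟩ := h X
  obtain ⟨N1, h1⟩ := hR
  obtain ⟨N2, h2⟩ := hRC'
  have hCC' : C = C' := comp_eq_of_mem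
    (of_mem_coe (h1 (max N1 N2) (le_max_left _ _)))
    (of_mem_coe (h2 (max N1 N2) (le_max_right _ _)))
  rw [hCC']
  exact hSC'

lemma rayEquiv_symm {R S : Ray G} (h : RayEquiv G R S) : RayEquiv G S R := fun X => by
  obtain ⟨C, h1, h2⟩ := h X
  exact ⟨C, h2, h1⟩

lemma rayEquiv_trans {R S T : Ray G} (h1 : RayEquiv G R S) (h2 : RayEquiv G S T) :
    RayEquiv G R T := by
  intro X
  obtain ⟨C, hR, hS⟩ := h1 X
  exact ⟨C, hR, tailIn_of_equiv h2 hS⟩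

/-- A representative ray of an end. -/
noncomputable def endRep (ω : Ends G) : Ray G := ω.2.choose

lemma endRep_spec (ω : Ends G) : ω.1 = {S | RayEquiv G (endRep ω) S} := ω.2.choose_spec

lemma mem_end_iff {ω : Ends G} {S : Ray G} : S ∈ ω.1 ↔ RayEquiv G (endRep ω) S := by
  rw [endRep_spec]
  rfl

lemma endRep_mem (ω : Ends G) : endRep ω ∈ ω.1 := mem_end_iff.mpr (rayEquiv_refl _)

lemma self_mem_end (R : Ray G) : R ∈ (R.end G).1 := rayEquiv_refl R

lemma mem_basicSet_iff {ω : Ends G} {R : Ray G} (hR : R ∈ ω.1) {X : Finset V}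
    {C : G.ComponentCompl (X : Set V)} : ω ∈ basicSet G X C ↔ R.TailIn (C : Set V) := by
  constructor
  · exact fun h => h R hR
  · intro hT S hS
    have h1 : RayEquiv G (endRep ω) R := mem_end_iff.mp hR
    have h2 : RayEquiv G (endRep ω) S := mem_end_iff.mp hS
    exact tailIn_of_equiv (rayEquiv_trans (rayEquiv_symm h1) h2) hT

lemma end_eq_of_equiv {ω : Ends G} {R S : Ray G} (hR : R ∈ ω.1) (hRS : RayEquiv G R S) :
    ω = S.end G := by
  apply Subtype.ext
  rw [endRep_spec]
  have h1 : RayEquiv G (endRep ω) R := mem_end_iff.mp hR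
  have hrepS : RayEquiv G (endRep ω) S := rayEquiv_trans h1 hRS
  ext T
  exact ⟨fun h => rayEquiv_trans (rayEquiv_symm hrepS) h, fun h => rayEquiv_trans hrepS h⟩

/-! #### The two standard rays of `GBT` over each branch -/

/-- The rooted tree ray along the branch `σ`. -/
noncomputable def treeRay (σ : ℕ → Bool) : Ray GBT where
  f := fun n => Sum.inl (pre2 σ n)
  inj := by
    intro a b h
    rw [Sum.inl.injEq] at h
    have := congrArg List.length h
    rwa [pre2_length, pre2_length] at this
  adj := (treeSpine_isSpine σ).adj

/-- The added ray `R'_σ`. -/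
noncomputable def newRay (σ : ℕ → Bool) : Ray GBT where
  f := fun n => Sum.inr (σ, n)
  inj := by
    intro a b h
    rw [Sum.inr.injEq, Prod.mk.injEq] at h
    exact h.2
  adj := (raySpine_isSpine σ).adj

/-- `ω_σ`: the tree end of the branch `σ`. -/
noncomputable def ωend (σ : ℕ → Bool) : Ends GBT := (treeRay σ).end GBT

/-- `η_σ`: the end of the added ray `R'_σ`. -/
noncomputable def ηend (σ : ℕ → Bool) : Ends GBT := (newRay σ).end GBT

lemma equiv_newRay {σ : ℕ → Bool} {R : Ray GBT} (h : ∀ m, R.TailIn (rtail σ m)) :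
    RayEquiv GBT R (newRay σ) := by
  intro X
  obtain ⟨m₀, hm₀⟩ := exists_big X σ
  have hdis := (hm₀ m₀ le_rfl).2
  obtain ⟨N, hN⟩ := h m₀
  have hmem : R.f N ∈ rtail σ m₀ := hN N le_rfl
  have hnotX : R.f N ∉ (X : Set BTV) := hdis _ hmem
  refine ⟨GBT.componentComplMk hnotX, ⟨N, fun n hn => ?_⟩, ⟨m₀ + 1, fun n hn => ?_⟩⟩
  · exact mem_coe (ReachIn.mem_comp hdis (GBT.componentComplMk_mem _)
      (rtail_conn _ hmem _ (hN n hn)))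
  · exact mem_coe (ReachIn.mem_comp hdis (GBT.componentComplMk_mem _)
      (rtail_conn _ hmem _ ⟨n, by omega, rfl⟩))

lemma equiv_treeRay {σ : ℕ → Bool} {R : Ray GBT}
    (h : ∀ m, R.TailIn (cone' (pre2 σ (m + 2)) σ)) : RayEquiv GBT R (treeRay σ) := by
  intro X
  obtain ⟨m₀, hm₀⟩ := exists_big X σ
  have hdis := (hm₀ m₀ le_rfl).1
  obtain ⟨N, hN⟩ := h m₀
  have hmem : R.f N ∈ cone' (pre2 σ (m₀ + 2)) σ := hN N le_rfl
  have hnotX : R.f N ∉ (X : Set BTV) := hdis _ hmem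
  refine ⟨GBT.componentComplMk hnotX, ⟨N, fun n hn => ?_⟩, ⟨m₀ + 2, fun n hn => ?_⟩⟩
  · exact mem_coe (ReachIn.mem_comp hdis (GBT.componentComplMk_mem _)
      (cone'_conn _ hmem _ (hN n hn)))
  · refine mem_coe (ReachIn.mem_comp hdis (GBT.componentComplMk_mem _)
      (cone'_conn _ hmem _ ?_))
    exact mem_cone'_inl.mpr (pre2_prefix σ hn)

/-- Every end of `GBT` lies over some branch: it is `ω_σ` or `η_σ`. -/
lemma end_classification (ω : Ends GBT) :
    ∃ σ : ℕ → Bool, ω = ωend σ ∨ ω = ηend σ := by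
  set R := endRep ω with hR
  set f := rayDir R with hf
  refine ⟨traceσ f, ?_⟩
  rcases dichotomy f with hA | hB
  · right
    have htail : ∀ m, R.TailIn (rtail (traceσ f) m) := by
      intro m
      obtain ⟨N, hN⟩ := rayDir_tailIn R (Yfin (traceσ f) m)
      exact ⟨N, fun n hn => (rtail_comp_eq (hA m)).subset (hN n hn)⟩
    exact end_eq_of_equiv (endRep_mem ω) (equiv_newRay htail)
  · left
    have htail : ∀ m, R.TailIn (cone' (pre2 (traceσ f) (m + 2)) (traceσ f)) := by
      intro m
      obtain ⟨N, hN⟩ := rayDir_tailIn R (Yfin (traceσ f) m)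
      exact ⟨N, fun n hn => (cone'_comp_eq (hB m)).subset (hN n hn)⟩
    exact end_eq_of_equiv (endRep_mem ω) (equiv_treeRay htail)

end AuxEnds

section AuxTopology

open SimpleGraph TopologicalSpace

lemma comp_subset_of_common_mem {G : SimpleGraph V} {X₁ X : Finset V} (h : X₁ ⊆ X)
    {C : G.ComponentCompl (X : Set V)} {C₁ : G.ComponentCompl (X₁ : Set V)} {v : V}
    (hv : v ∈ C) (hv1 : v ∈ C₁) : (C : Set V) ⊆ (C₁ : Set V) := by
  have hhom : v ∈ C.hom h := ComponentCompl.subset_hom C h (mem_coe hv)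
  have heq : C.hom h = C₁ := comp_eq_of_mem hhom hv1
  rw [← heq]
  exact ComponentCompl.subset_hom C h

/-- The basic open sets form a topological basis of the end space of `GBT`. -/
lemma ends_basis :
    IsTopologicalBasis {U : Set (Ends GBT) |
      ∃ (X : Finset BTV) (C : GBT.ComponentCompl (X : Set BTV)), U = basicSet GBT X C} := by
  refine ⟨?_, ?_, rfl⟩
  · rintro U₁ ⟨X₁, C₁, rfl⟩ U₂ ⟨X₂, C₂, rfl⟩ ω ⟨h₁, h₂⟩
    classical
    set R := endRep ω with hRdef
    set X := X₁ ∪ X₂ with hX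
    set C := dirComp (rayDir R) X with hC
    have hT : R.TailIn (C : Set BTV) := rayDir_tailIn R X
    have hT₀ : R.TailIn (C : Set BTV) := rayDir_tailIn R X
    have hT₁ : R.TailIn (C₁ : Set BTV) := (mem_basicSet_iff (endRep_mem ω)).mp h₁
    have hT₂ : R.TailIn (C₂ : Set BTV) := (mem_basicSet_iff (endRep_mem ω)).mp h₂
    obtain ⟨N1, hN1⟩ := hT₀
    obtain ⟨N2, hN2⟩ := hT₁
    obtain ⟨N3, hN3⟩ := hT₂
    set M := max N1 (max N2 N3) with hM
    have hsub1 : (C : Set BTV) ⊆ (C₁ : Set BTV) :=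
      comp_subset_of_common_mem Finset.subset_union_left
        (of_mem_coe (hN1 M (le_max_left _ _)))
        (of_mem_coe (hN2 M (le_trans (le_max_left _ _) (le_max_right _ _))))
    have hsub2 : (C : Set BTV) ⊆ (C₂ : Set BTV) :=
      comp_subset_of_common_mem Finset.subset_union_right
        (of_mem_coe (hN1 M (le_max_left _ _)))
        (of_mem_coe (hN3 M (le_trans (le_max_right _ _) (le_max_right _ _))))
    refine ⟨basicSet GBT X C, ⟨X, C, rfl⟩, (mem_basicSet_iff (endRep_mem ω)).mpr hT, ?_⟩
    intro ω' hω'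
    have hT' := (mem_basicSet_iff (endRep_mem ω')).mp hω'
    exact ⟨(mem_basicSet_iff (endRep_mem ω')).mpr (tailIn_mono hT' hsub1),
      (mem_basicSet_iff (endRep_mem ω')).mpr (tailIn_mono hT' hsub2)⟩
  · rw [Set.sUnion_eq_univ_iff]
    intro ω
    exact ⟨basicSet GBT ∅ (dirComp (rayDir (endRep ω)) ∅),
      ⟨∅, _, rfl⟩, (mem_basicSet_iff (endRep_mem ω)).mpr (rayDir_tailIn _ _)⟩

/-! #### `η_σ` is isolated -/

lemma spoke_one_not_mem (σ : ℕ → Bool) :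
    (Sum.inr (σ, 1) : BTV) ∉ (({Sum.inr (σ, 0)} : Finset BTV) : Set BTV) := by
  simp

/-- The component of `(σ,1)` in `G - (σ,0)`. -/
noncomputable def etaComp (σ : ℕ → Bool) :
    GBT.ComponentCompl (({Sum.inr (σ, 0)} : Finset BTV) : Set BTV) :=
  GBT.componentComplMk (spoke_one_not_mem σ)

lemma etaComp_set (σ : ℕ → Bool) : (etaComp σ : Set BTV) = rtail σ 0 :=
  rtail0_comp_eq rfl (by omega) (GBT.componentComplMk_mem _)

lemma tailIn_rtail_all {σ : ℕ → Bool} {R : Ray GBT} (h0 : R.TailIn (rtail σ 0)) :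
    ∀ m, R.TailIn (rtail σ m) := by
  intro m
  classical
  obtain ⟨N0, h0'⟩ := h0
  obtain ⟨N1, h1⟩ := (ray_isSpine R).escape ((Finset.range (m + 1)).image fun j => Sum.inr (σ, j))
  refine ⟨max N0 N1, fun n hn => ?_⟩
  obtain ⟨j, hj, he⟩ := h0' n (le_trans (le_max_left _ _) hn)
  refine ⟨j, ?_, he⟩
  by_contra hjm
  refine h1 n (le_trans (le_max_right _ _) hn) ?_
  rw [he]
  simp only [Finset.coe_image, Finset.coe_range, Set.mem_image, Set.mem_Iio]
  exact ⟨j, by omega, rfl⟩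

lemma eta_basic (σ : ℕ → Bool) :
    basicSet GBT ({Sum.inr (σ, 0)} : Finset BTV) (etaComp σ) = {ηend σ} := by
  ext ω
  rw [Set.mem_singleton_iff]
  constructor
  · intro hω
    have hT : (endRep ω).TailIn (etaComp σ : Set BTV) := (mem_basicSet_iff (endRep_mem ω)).mp hω
    rw [etaComp_set] at hT
    exact end_eq_of_equiv (endRep_mem ω) (equiv_newRay (tailIn_rtail_all hT))
  · rintro rfl
    refine (mem_basicSet_iff (self_mem_end (newRay σ))).mpr ⟨1, fun n hn => ?_⟩
    rw [etaComp_set]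
    exact ⟨n, by omega, rfl⟩

lemma isOpen_eta (σ : ℕ → Bool) : IsOpen ({ηend σ} : Set (Ends GBT)) := by
  rw [← eta_basic σ]
  exact ends_basis.isOpen ⟨_, _, rfl⟩

lemma etaend_inj : Function.Injective ηend := by
  intro σ τ h
  by_contra hστ
  have hmemτ : newRay τ ∈ (ηend σ).1 := by
    rw [h]
    exact self_mem_end _
  have hequiv : RayEquiv GBT (newRay σ) (newRay τ) := by
    have h1 : RayEquiv GBT (endRep (ηend σ)) (newRay σ) := mem_end_iff.mp (self_mem_end _)
    have h2 : RayEquiv GBT (endRep (ηend σ)) (newRay τ) := mem_end_iff.mp hmemτ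
    exact rayEquiv_trans (rayEquiv_symm h1) h2
  obtain ⟨C, h1, h2⟩ := hequiv ({Sum.inr (σ, 0)} : Finset BTV)
  obtain ⟨N1, hN1⟩ := h1
  obtain ⟨N2, hN2⟩ := h2
  set k := max N1 1 with hk
  have hmem : (newRay σ).f k ∈ C := of_mem_coe (hN1 k (le_max_left _ _))
  have hset : (C : Set BTV) = rtail σ 0 := rtail0_comp_eq rfl (by omega) hmem
  have hmem2 : (newRay τ).f N2 ∈ rtail σ 0 := hset.subset (hN2 N2 le_rfl)
  obtain ⟨j, hj, he⟩ := hmem2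
  have he' : (Sum.inr (τ, N2) : BTV) = Sum.inr (σ, j) := he
  rw [Sum.inr.injEq, Prod.mk.injEq] at he'
  exact hστ (he'.1.symm ▸ rfl)

lemma nhds_eta (σ : ℕ → Bool) : nhds (ηend σ) = pure (ηend σ) :=
  le_antisymm (Filter.le_pure_iff.mpr ((isOpen_eta σ).mem_nhds rfl)) (pure_le_nhds _)

/-! #### Neighbourhood basis at `ω_σ` -/

lemma treeTop_not_mem_Yfin (σ : ℕ → Bool) (m : ℕ) :
    (Sum.inl (pre2 σ (m + 2)) : BTV) ∉ ((Yfin σ m : Finset BTV) : Set BTV) :=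
  cone'_disj_Yfin _ (mem_cone'_inl.mpr (List.prefix_refl _))

/-- The component of the pruned cone at level `m+2` in `G - Yfin σ m`. -/
noncomputable def omegaComp (σ : ℕ → Bool) (m : ℕ) :
    GBT.ComponentCompl ((Yfin σ m : Finset BTV) : Set BTV) :=
  GBT.componentComplMk (treeTop_not_mem_Yfin σ m)

lemma omegaComp_set (σ : ℕ → Bool) (m : ℕ) :
    (omegaComp σ m : Set BTV) = cone' (pre2 σ (m + 2)) σ :=
  cone'_comp_eq (GBT.componentComplMk_mem _)

lemma treeRay_tailIn_omegaComp (σ : ℕ → Bool) (m : ℕ) :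
    (treeRay σ).TailIn (omegaComp σ m : Set BTV) := by
  refine ⟨m + 2, fun n hn => ?_⟩
  rw [omegaComp_set]
  exact mem_cone'_inl.mpr (pre2_prefix σ hn)

lemma omega_mem_Bm (σ : ℕ → Bool) (m : ℕ) :
    ωend σ ∈ basicSet GBT (Yfin σ m) (omegaComp σ m) :=
  (mem_basicSet_iff (self_mem_end (treeRay σ))).mpr (treeRay_tailIn_omegaComp σ m)

lemma cone'_sub_comp {σ : ℕ → Bool} {X : Finset BTV} {m : ℕ}
    {C : GBT.ComponentCompl (X : Set BTV)}
    (hdis : ∀ w ∈ cone' (pre2 σ (m + 2)) σ, w ∉ (X : Set BTV))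
    (hmem : ωend σ ∈ basicSet GBT X C) :
    cone' (pre2 σ (m + 2)) σ ⊆ (C : Set BTV) := by
  have hT : (treeRay σ).TailIn (C : Set BTV) :=
    (mem_basicSet_iff (self_mem_end (treeRay σ))).mp hmem
  obtain ⟨N, hN⟩ := hT
  set n₁ := max N (m + 2) with hn₁
  have hpt1 : Sum.inl (pre2 σ n₁) ∈ C := of_mem_coe (hN n₁ (le_max_left _ _))
  have hpt2 : (Sum.inl (pre2 σ n₁) : BTV) ∈ cone' (pre2 σ (m + 2)) σ :=
    mem_cone'_inl.mpr (pre2_prefix σ (le_max_right _ _))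
  intro w hw
  exact mem_coe (ReachIn.mem_comp hdis hpt1 (cone'_conn _ hpt2 _ hw))

lemma nhds_basis_omega (σ : ℕ → Bool) :
    (nhds (ωend σ)).HasBasis (fun _ : ℕ => True)
      (fun m => basicSet GBT (Yfin σ m) (omegaComp σ m)) := by
  constructor
  intro t
  rw [ends_basis.mem_nhds_iff]
  constructor
  · rintro ⟨U, ⟨X, C, rfl⟩, hmem, hsub⟩
    obtain ⟨m₀, hm₀⟩ := exists_big X σ
    refine ⟨m₀, trivial, ?_⟩
    have hsub2 : cone' (pre2 σ (m₀ + 2)) σ ⊆ (C : Set BTV) :=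
      cone'_sub_comp (hm₀ m₀ le_rfl).1 hmem
    refine subset_trans ?_ hsub
    intro ω' hω'
    have h1 : (endRep ω').TailIn (omegaComp σ m₀ : Set BTV) :=
      (mem_basicSet_iff (endRep_mem ω')).mp hω'
    refine (mem_basicSet_iff (endRep_mem ω')).mpr (tailIn_mono h1 ?_)
    rw [omegaComp_set]
    exact hsub2
  · rintro ⟨m, -, hsub⟩
    exact ⟨_, ⟨Yfin σ m, omegaComp σ m, rfl⟩, omega_mem_Bm σ m, hsub⟩

theorem ends_first_countable (ω : Ends GBT) : (nhds ω).IsCountablyGenerated := by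
  obtain ⟨σ, h | h⟩ := end_classification ω
  · rw [h]
    exact (nhds_basis_omega σ).isCountablyGenerated
  · rw [h, nhds_eta σ]
    rw [← Filter.principal_singleton]
    exact Filter.isCountablyGenerated_principal _

theorem ends_not_separable : ¬ SeparableSpace (Ends GBT) := by
  intro h
  obtain ⟨s, hsc, hsd⟩ := TopologicalSpace.exists_countable_dense (Ends GBT)
  have hmem : ∀ σ : ℕ → Bool, ηend σ ∈ s := by
    intro σ
    obtain ⟨x, hx1, hx2⟩ :=
      hsd.inter_open_nonempty _ (isOpen_eta σ) ⟨ηend σ, rfl⟩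
    rw [Set.mem_singleton_iff] at hx1
    rwa [← hx1]
  have hcnt : (Set.univ : Set (ℕ → Bool)).Countable := by
    have hpre : (ηend ⁻¹' s).Countable := hsc.preimage etaend_inj
    exact hpre.mono (fun σ _ => hmem σ) |>.mono (le_refl _)
  exact funBool_uncountable hcnt

end AuxTopology

section AuxCompact

open SimpleGraph TopologicalSpace

/-- The component of `G - Qfin s` containing the cone above `s`. -/
noncomputable def Ecomp (s : List Bool) : GBT.ComponentCompl ((Qfin s : Finset BTV) : Set BTV) :=
  GBT.componentComplMk (v := Sum.inl s)
    (fun hc => cone_disj_Qfin _ (mem_cone_inl.mpr (List.prefix_refl s)) hc)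

lemma Ecomp_set (s : List Bool) : (Ecomp s : Set BTV) = cone s :=
  cone_comp_eq (GBT.componentComplMk_mem _)

/-- The set of ends living in the cone above `s`. -/
noncomputable def Eset (s : List Bool) : Set (Ends GBT) := basicSet GBT (Qfin s) (Ecomp s)

lemma Eset_nil : Eset [] = Set.univ := by
  ext ω
  simp only [Set.mem_univ, iff_true]
  refine (mem_basicSet_iff (endRep_mem ω)).mpr ⟨0, fun n _ => ?_⟩
  exact (Ecomp_set []).symm.subset (mem_cone_nil _)

lemma Eset_split (s : List Bool) :
    Eset s ⊆ Eset (s ++ [true]) ∪ Eset (s ++ [false]) := by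
  classical
  intro ω hω
  set R := endRep ω with hRdef
  have hT : R.TailIn ((Ecomp s : GBT.ComponentCompl _) : Set BTV) :=
    (mem_basicSet_iff (endRep_mem ω)).mp hω
  obtain ⟨N0, hN0⟩ := hT
  obtain ⟨N1, hN1⟩ := (ray_isSpine R).escape (insert (Sum.inl s) (Qfin s))
  set N := max N0 N1 with hNdef
  have hmemN : R.f N ∈ cone s := (Ecomp_set s).subset (hN0 N (le_max_left _ _))
  have hne : R.f N ≠ Sum.inl s := by
    intro he
    refine hN1 N (le_max_right _ _) ?_
    rw [he]
    simp
  obtain ⟨b, hb⟩ := cone_child hmemN hne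
  have hQ : Qfin (s ++ [b]) = insert (Sum.inl s) (Qfin s) := Qfin_child s b
  have htail : ∀ n, N ≤ n → R.f n ∈ cone (s ++ [b]) := by
    intro n hn
    induction n with
    | zero =>
      have hN0' : N = 0 := Nat.le_zero.mp hn
      rw [← hN0']
      exact hb
    | succ n ih =>
      rcases Nat.lt_or_ge N (n + 1) with h' | h'
      · have hprev := ih (by omega)
        rcases cone_closed _ hprev _ (R.adj n) with h | h
        · exact h
        · exfalso
          refine hN1 (n + 1) (by omega) ?_
          rw [hQ] at h
          exact h
      · have hNn : N = n + 1 := by omega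
        rw [← hNn]
        exact hb
  have hmem' : ω ∈ Eset (s ++ [b]) := by
    refine (mem_basicSet_iff (endRep_mem ω)).mpr ⟨N, fun n hn => ?_⟩
    exact (Ecomp_set (s ++ [b])).symm.subset (htail n hn)
  cases b
  · exact Or.inr hmem'
  · exact Or.inl hmem'

/-- Choosing a branch along which a property persists. -/
noncomputable def chooseBranch (P : List Bool → Prop) (h0 : P [])
    (hstep : ∀ s, P s → ∃ b, P (s ++ [b])) : ℕ → {s : List Bool // P s}
  | 0 => ⟨[], h0⟩
  | n + 1 => ⟨(chooseBranch P h0 hstep n).1 ++ [(hstep _ (chooseBranch P h0 hstep n).2).choose],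
      (hstep _ (chooseBranch P h0 hstep n).2).choose_spec⟩

noncomputable def branchσ (P : List Bool → Prop) (h0 : P [])
    (hstep : ∀ s, P s → ∃ b, P (s ++ [b])) : ℕ → Bool :=
  fun n => (hstep _ (chooseBranch P h0 hstep n).2).choose

lemma chooseBranch_eq (P : List Bool → Prop) (h0 : P [])
    (hstep : ∀ s, P s → ∃ b, P (s ++ [b])) :
    ∀ n, (chooseBranch P h0 hstep n).1 = pre2 (branchσ P h0 hstep) n
  | 0 => rfl
  | n + 1 => by
    show (chooseBranch P h0 hstep n).1 ++ [branchσ P h0 hstep n] = _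
    rw [chooseBranch_eq P h0 hstep n, pre2_succ]

lemma branch_spec (P : List Bool → Prop) (h0 : P [])
    (hstep : ∀ s, P s → ∃ b, P (s ++ [b])) (n : ℕ) :
    P (pre2 (branchσ P h0 hstep) n) := by
  rw [← chooseBranch_eq P h0 hstep n]
  exact (chooseBranch P h0 hstep n).2

theorem ends_compact : CompactSpace (Ends GBT) := by
  rw [← isCompact_univ_iff]
  refine isCompact_of_finite_subcover fun {ι} U hUo hcov => ?_
  by_contra hfin
  push_neg at hfin
  classical
  set P : List Bool → Prop := fun s => ∀ t : Finset ι, ¬ Eset s ⊆ ⋃ i ∈ t, U i with hP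
  have h0 : P [] := by
    intro t ht
    rw [Eset_nil] at ht
    exact hfin t ht
  have hstep : ∀ s, P s → ∃ b, P (s ++ [b]) := by
    intro s hs
    by_contra hcon
    push_neg at hcon
    have hc1 := hcon true
    have hc2 := hcon false
    simp only [hP, not_forall, not_not] at hc1 hc2
    obtain ⟨t1, ht1⟩ := hc1
    obtain ⟨t2, ht2⟩ := hc2
    refine hs (t1 ∪ t2) ?_
    intro ω hω
    rcases Eset_split s hω with h | h
    · obtain ⟨i, hi, hmem⟩ := Set.mem_iUnion₂.mp (ht1 h)
      exact Set.mem_iUnion₂.mpr ⟨i, Finset.mem_union_left _ hi, hmem⟩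
    · obtain ⟨i, hi, hmem⟩ := Set.mem_iUnion₂.mp (ht2 h)
      exact Set.mem_iUnion₂.mpr ⟨i, Finset.mem_union_right _ hi, hmem⟩
  set σ := branchσ P h0 hstep with hσdef
  have hPσ : ∀ n, P (pre2 σ n) := fun n => branch_spec P h0 hstep n
  obtain ⟨i₀, hi₀⟩ := Set.mem_iUnion.mp (hcov (Set.mem_univ (ωend σ)))
  obtain ⟨i₁, hi₁⟩ := Set.mem_iUnion.mp (hcov (Set.mem_univ (ηend σ)))
  obtain ⟨Ub, hUb, hmem, hsub⟩ := ends_basis.exists_subset_of_mem_open hi₀ (hUo i₀)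
  obtain ⟨X, C, rfl⟩ := hUb
  obtain ⟨m₀, hm₀⟩ := exists_big X σ
  have hdis := (hm₀ m₀ le_rfl).1
  have hsubC : cone' (pre2 σ (m₀ + 2)) σ ⊆ (C : Set BTV) := cone'_sub_comp hdis hmem
  refine hPσ (m₀ + 2) {i₀, i₁} ?_
  intro ω hω
  obtain ⟨τ, hτ | hτ⟩ := end_classification ω
  · subst hτ
    have hT : (treeRay τ).TailIn ((Ecomp (pre2 σ (m₀ + 2)) : GBT.ComponentCompl _) : Set BTV) :=
      (mem_basicSet_iff (self_mem_end _)).mp hω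
    obtain ⟨N, hN⟩ := hT
    have hpre : pre2 σ (m₀ + 2) <+: pre2 τ (max N (m₀ + 2)) :=
      mem_cone_inl.mp ((Ecomp_set _).subset (hN _ (le_max_left _ _)))
    have hpre2 : pre2 τ (m₀ + 2) = pre2 σ (m₀ + 2) := by
      have h1 := prefix_pre2 hpre
      rw [pre2_length] at h1
      exact h1.symm
    have hin : ωend τ ∈ basicSet GBT X C := by
      refine (mem_basicSet_iff (self_mem_end _)).mpr ⟨m₀ + 2, fun n hn => ?_⟩
      refine hsubC (mem_cone'_inl.mpr ?_)
      rw [← hpre2]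
      exact pre2_prefix τ hn
    exact Set.mem_iUnion₂.mpr ⟨i₀, by simp, hsub hin⟩
  · subst hτ
    have hT : (newRay τ).TailIn ((Ecomp (pre2 σ (m₀ + 2)) : GBT.ComponentCompl _) : Set BTV) :=
      (mem_basicSet_iff (self_mem_end _)).mp hω
    obtain ⟨N, hN⟩ := hT
    have hpre2 : pre2 τ (m₀ + 2) = pre2 σ (m₀ + 2) := by
      have h2 : (Sum.inr (τ, N) : BTV) ∈ cone (pre2 σ (m₀ + 2)) :=
        (Ecomp_set _).subset (hN N le_rfl)
      have h3 := mem_cone_inr.mp h2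
      rwa [pre2_length] at h3
    by_cases hτσ : τ = σ
    · subst hτσ
      exact Set.mem_iUnion₂.mpr ⟨i₁, by simp, hi₁⟩
    · have hin : ηend τ ∈ basicSet GBT X C := by
        refine (mem_basicSet_iff (self_mem_end _)).mpr ⟨0, fun n _ => ?_⟩
        refine hsubC (mem_cone'_inr.mpr ⟨?_, hτσ⟩)
        rw [pre2_length]
        exact hpre2
      exact Set.mem_iUnion₂.mpr ⟨i₀, by simp, hsub hin⟩

theorem ends_not_second_countable : ¬ SecondCountableTopology (Ends GBT) := by
  intro h
  haveI := h
  exact ends_not_separable inferInstance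

theorem ends_not_metrizable : ¬ MetrizableSpace (Ends GBT) := by
  intro h
  haveI := h
  haveI := ends_compact
  haveI : SecondCountableTopology (Ends GBT) := inferInstance
  exact ends_not_separable inferInstance

end AuxCompact

/-- There is a connected graph all of whose directions are countably
determined but which is itself not countably determined; its end space is
compact and first countable at every end, but neither separable nor second
countable nor metrisable.  Such a graph is `GBT`, obtained from the binary
tree `T₂` by adding, for each rooted ray `R ⊆ T₂`, a disjoint new ray `R'`
whose first vertex is joined to all vertices of `R`. -/
theorem stmt_11 :
    GBT.Connected ∧
    (∀ f : GBT.end, DirCountablyDetermined f) ∧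
    ¬ GraphCountablyDetermined GBT ∧
    CompactSpace (Ends GBT) ∧
    (∀ ω : Ends GBT, (nhds ω).IsCountablyGenerated) ∧
    ¬ TopologicalSpace.SeparableSpace (Ends GBT) ∧
    ¬ SecondCountableTopology (Ends GBT) ∧
    ¬ TopologicalSpace.MetrizableSpace (Ends GBT) :=
  ⟨GBT_connected, dir_countably_determined, not_graph_cd, ends_compact,
    ends_first_countable, ends_not_separable, ends_not_second_countable, ends_not_metrizable⟩
end

section
/- For every connected graph G, the space |G| = G ∪ Ω(G) with the topology MTop is second countable if and only if the vertex set V(G) is countable. -/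
/-! Common definitions: rays, ends (à la Halin), the end space, directions
(via Mathlib's `SimpleGraph.end`), domination, generalised paths, etc. -/

open Classical SimpleGraph

universe u

variable {V : Type u}

/-- The points of the space `|G|` before identification: vertices, interior
points of (directed) edges, and ends. -/
inductive MPt (G : SimpleGraph V) : Type u
  | vtx : V → MPt G
  | edge : G.Dart → { t : ℝ // 0 < t ∧ t < 1 } → MPt G
  | ends : Ends G → MPt G

/-- Identify the two parametrisations of each edge. -/
inductive MRel (G : SimpleGraph V) : MPt G → MPt G → Prop
  | flip (d : G.Dart) (t : ℝ) (h : 0 < t ∧ t < 1) (h' : 0 < 1 - t ∧ 1 - t < 1) :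
      MRel G (MPt.edge d ⟨t, h⟩) (MPt.edge d.symm ⟨1 - t, h'⟩)

/-- The point set of `|G| = G ∪ Ω(G)`, with `G` the metric length-space. -/
def MSpace (G : SimpleGraph V) : Type u := Quot (MRel G)

/-- An open segment of an edge. -/
def mSeg (G : SimpleGraph V) (d : G.Dart) (a b : ℝ) : Set (MSpace G) :=
  { x | ∃ (t : ℝ) (h : 0 < t ∧ t < 1), a < t ∧ t < b ∧
      x = Quot.mk _ (MPt.edge d ⟨t, h⟩) }

/-- The open star of radius `ε` around the vertex `v`. -/
def mStar (G : SimpleGraph V) (v : V) (ε : ℝ) : Set (MSpace G) :=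
  insert (Quot.mk _ (MPt.vtx v))
    { x | ∃ (d : G.Dart) (t : ℝ) (h : 0 < t ∧ t < 1), d.toProd.1 = v ∧ t < ε ∧
        x = Quot.mk _ (MPt.edge d ⟨t, h⟩) }

/-- The basic open neighbourhood `Ĉ_ε(X,ω)` of an end: the ends and the
vertices in `C = C(X,ω)` together with the open ball of radius `ε` around `C`
in the length-space `G`. -/
def mEndNbhd (G : SimpleGraph V) (X : Finset V)
    (C : G.ComponentCompl (X : Set V)) (ε : ℝ) : Set (MSpace G) :=
  { x | ∃ ω : Ends G, LivesIn ω X C ∧ x = Quot.mk _ (MPt.ends ω) } ∪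
  { x | ∃ v ∈ (C : Set V), x = Quot.mk _ (MPt.vtx v) } ∪
  { x | ∃ (d : G.Dart) (t : ℝ) (h : 0 < t ∧ t < 1),
      d.toProd.1 ∈ (C : Set V) ∧ (d.toProd.2 ∈ (C : Set V) ∨ t < ε) ∧
      x = Quot.mk _ (MPt.edge d ⟨t, h⟩) }

/-- The topology MTop on `|G|`. -/
instance mTop (G : SimpleGraph V) : TopologicalSpace (MSpace G) :=
  TopologicalSpace.generateFrom
    ({ U | ∃ (d : G.Dart) (a b : ℝ), U = mSeg G d a b } ∪
     { U | ∃ (v : V) (ε : ℝ), 0 < ε ∧ U = mStar G v ε } ∪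
     { U | ∃ (X : Finset V) (C : G.ComponentCompl (X : Set V)) (ε : ℝ),
         0 < ε ∧ U = mEndNbhd G X C ε })

/-- The neighbourhood `N(C)` of a vertex set `C` in `G`. -/
def nbhdOf (G : SimpleGraph V) (C : Set V) : Set V :=
  { v | v ∉ C ∧ ∃ u ∈ C, G.Adj u v }



section Stmt19Aux

variable {G : SimpleGraph V}

/-- An invariant of the quotient relation, used to distinguish points of `MSpace G`. -/
noncomputable def stmtInv : MPt G → Option V × Option (V × ℝ)
  | .vtx v => (some v, none)
  | .ends _ => (none, none)
  | .edge d t =>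
      (none,
        if t.1 < 1/2 then some (d.toProd.1, t.1)
        else if 1/2 < t.1 then some (d.toProd.2, 1 - t.1)
        else none)

lemma stmtInv_rel : ∀ a b : MPt G, MRel G a b → stmtInv a = stmtInv b := by
  rintro _ _ ⟨d, t, h, h'⟩
  show (none, _) = (none, _)
  rcases lt_trichotomy t (1/2 : ℝ) with ht | ht | ht
  · rw [if_pos (show t < 1/2 from ht), if_neg (show ¬ ((1:ℝ) - t < 1/2) by linarith),
      if_pos (show (1:ℝ)/2 < 1 - t by linarith)]
    have h2 : d.symm.toProd.2 = d.toProd.1 := rfl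
    rw [h2]
    norm_num
  · rw [if_neg (show ¬ (t < 1/2) by rw [ht]; norm_num), if_neg (show ¬ ((1:ℝ)/2 < t) by rw [ht]; norm_num),
      if_neg (show ¬ ((1:ℝ) - t < 1/2) by rw [ht]; norm_num),
      if_neg (show ¬ ((1:ℝ)/2 < 1 - t) by rw [ht]; norm_num)]
  · rw [if_neg (show ¬ (t < 1/2) by linarith), if_pos (show (1:ℝ)/2 < t from ht),
      if_pos (show (1:ℝ) - t < 1/2 by linarith)]
    have h2 : d.symm.toProd.1 = d.toProd.2 := rfl
    rw [h2]

/-- The invariant descends to `MSpace G`. -/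
noncomputable def stmtInvF (G : SimpleGraph V) : MSpace G → Option V × Option (V × ℝ) :=
  Quot.lift stmtInv (stmtInv_rel)

lemma stmtInvF_of_mem_star {v : V} {x : MSpace G} (hx : x ∈ mStar G v (1/2 : ℝ)) :
    stmtInvF G x = (some v, none) ∨ ∃ t : ℝ, stmtInvF G x = (none, some (v, t)) := by
  rcases Set.mem_insert_iff.mp hx with rfl | ⟨d, t, h, hd, ht, rfl⟩
  · exact Or.inl rfl
  · refine Or.inr ⟨t, ?_⟩
    show stmtInv (MPt.edge d ⟨t, h⟩) = _
    show (none, if t < 1/2 then some (d.toProd.1, t) else _) = _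
    rw [if_pos ht, hd]

lemma eq_of_mem_stars {u v : V} {x : MSpace G} (hu : x ∈ mStar G u (1/2 : ℝ))
    (hv : x ∈ mStar G v (1/2 : ℝ)) : u = v := by
  rcases stmtInvF_of_mem_star hu with h1 | ⟨t, h1⟩ <;>
    rcases stmtInvF_of_mem_star hv with h2 | ⟨s, h2⟩ <;>
      rw [h1] at h2 <;> simp_all

lemma mSeg_mono {d : G.Dart} {a a' b b' : ℝ} (ha : a ≤ a') (hb : b' ≤ b) :
    mSeg G d a' b' ⊆ mSeg G d a b := by
  rintro x ⟨t, h, h1, h2, rfl⟩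
  exact ⟨t, h, ha.trans_lt h1, h2.trans_le hb, rfl⟩

lemma mStar_mono {v : V} {ε ε' : ℝ} (h : ε ≤ ε') : mStar G v ε ⊆ mStar G v ε' := by
  intro x hx
  rcases Set.mem_insert_iff.mp hx with rfl | ⟨d, t, ht, hd, hte, rfl⟩
  · exact Set.mem_insert _ _
  · exact Set.mem_insert_iff.mpr (Or.inr ⟨d, t, ht, hd, hte.trans_le h, rfl⟩)

lemma mEndNbhd_mono {X : Finset V} {C : G.ComponentCompl (X : Set V)} {ε ε' : ℝ}
    (h : ε ≤ ε') : mEndNbhd G X C ε ⊆ mEndNbhd G X C ε' := by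
  rintro x ((hx | hx) | ⟨d, t, ht, h1, h2, rfl⟩)
  · exact Or.inl (Or.inl hx)
  · exact Or.inl (Or.inr hx)
  · exact Or.inr ⟨d, t, ht, h1, h2.imp_right (fun h' => h'.trans_le h), rfl⟩

end Stmt19Aux

/-- For a connected graph `G`, the space `|G|` with MTop is second countable
iff the vertex set of `G` is countable. -/
theorem stmt_19 {V : Type u} (G : SimpleGraph V) (hG : G.Connected) :
    SecondCountableTopology (MSpace G) ↔ Countable V := by
  constructor
  · -- second countable → countable vertex set
    intro hsc
    obtain ⟨b, hbc, -, hb⟩ := TopologicalSpace.exists_countable_basis (MSpace G)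
    have hopen : ∀ v : V, IsOpen (mStar G v (1/2 : ℝ)) := fun v =>
      TopologicalSpace.GenerateOpen.basic _ (Or.inl (Or.inr ⟨v, 1/2, by norm_num, rfl⟩))
    have hmem : ∀ v : V, Quot.mk (MRel G) (MPt.vtx v) ∈ mStar G v (1/2 : ℝ) := fun v =>
      Set.mem_insert _ _
    choose g hg1 hg2 hg3 using fun v : V =>
      hb.exists_subset_of_mem_open (hmem v) (hopen v)
    have hginj : Function.Injective g := fun u v h =>
      eq_of_mem_stars (hg3 u (hg2 u)) (hg3 v (h ▸ hg2 u))
    haveI := hbc.to_subtype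
    exact Function.Injective.countable
      (f := fun v : V => (⟨g v, hg1 v⟩ : {s // s ∈ b}))
      (fun u v h => hginj (congrArg Subtype.val h))
  · -- countable vertex set → second countable
    intro hV
    haveI := hV
    haveI : Countable G.Dart :=
      Function.Injective.countable (f := SimpleGraph.Dart.toProd)
        (fun a b h => SimpleGraph.Dart.ext a b h)
    haveI hCC : ∀ X : Finset V, Countable (G.ComponentCompl (X : Set V)) := fun X => by
      unfold SimpleGraph.ComponentCompl SimpleGraph.ConnectedComponent
      infer_instance
    set S₀ : Set (Set (MSpace G)) :=
      ({U | ∃ (d : G.Dart) (a b : ℚ), U = mSeg G d a b} ∪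
       {U | ∃ (v : V) (ε : ℚ), 0 < ε ∧ U = mStar G v ε} ∪
       {U | ∃ (X : Finset V) (C : G.ComponentCompl (X : Set V)) (ε : ℚ),
          0 < ε ∧ U = mEndNbhd G X C ε}) with hS₀
    have hcnt : S₀.Countable := by
      refine Set.Countable.union (Set.Countable.union ?_ ?_) ?_
      · exact Set.Countable.mono
          (fun U => by rintro ⟨d, a, q, rfl⟩; exact ⟨(d, a, q), rfl⟩)
          (Set.countable_range fun p : G.Dart × ℚ × ℚ => mSeg G p.1 p.2.1 p.2.2)
      · exact Set.Countable.mono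
          (fun U => by rintro ⟨v, ε, -, rfl⟩; exact ⟨(v, ε), rfl⟩)
          (Set.countable_range fun p : V × ℚ => mStar G p.1 p.2)
      · exact Set.Countable.mono
          (fun U => by rintro ⟨X, C, ε, -, rfl⟩; exact ⟨(⟨X, C⟩, ε), rfl⟩)
          (Set.countable_range
            fun p : (Σ X : Finset V, G.ComponentCompl (X : Set V)) × ℚ =>
              mEndNbhd G p.1.1 p.1.2 p.2)
    refine ⟨⟨S₀, hcnt, ?_⟩⟩
    refine le_antisymm ?_ ?_
    · -- mTop ≤ generateFrom S₀ : S₀ ⊆ generators of mTop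
      refine TopologicalSpace.generateFrom_anti ?_
      rintro U ((⟨d, a, q, rfl⟩ | ⟨v, ε, hε, rfl⟩) | ⟨X, C, ε, hε, rfl⟩)
      · exact Or.inl (Or.inl ⟨d, a, q, rfl⟩)
      · exact Or.inl (Or.inr ⟨v, ε, by exact_mod_cast hε, rfl⟩)
      · exact Or.inr ⟨X, C, ε, by exact_mod_cast hε, rfl⟩
    · -- generateFrom S₀ ≤ mTop : each generator of mTop is S₀-open
      rw [show (mTop G : TopologicalSpace (MSpace G)) =
          TopologicalSpace.generateFrom
            ({ U | ∃ (d : G.Dart) (a b : ℝ), U = mSeg G d a b } ∪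
             { U | ∃ (v : V) (ε : ℝ), 0 < ε ∧ U = mStar G v ε } ∪
             { U | ∃ (X : Finset V) (C : G.ComponentCompl (X : Set V)) (ε : ℝ),
                 0 < ε ∧ U = mEndNbhd G X C ε }) from rfl,
        TopologicalSpace.le_generateFrom_iff_subset_isOpen]
      rintro U ((⟨d, a, c, rfl⟩ | ⟨v, ε, hε, rfl⟩) | ⟨X, C, ε, hε, rfl⟩)
      · -- open segments
        have key : mSeg G d a c =
            ⋃₀ {W | ∃ q q' : ℚ, a ≤ (q : ℝ) ∧ (q' : ℝ) ≤ c ∧ W = mSeg G d q q'} := by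
          ext x
          constructor
          · rintro ⟨t, h, h1, h2, rfl⟩
            obtain ⟨q, hq1, hq2⟩ := exists_rat_btwn h1
            obtain ⟨q', hq1', hq2'⟩ := exists_rat_btwn h2
            exact ⟨_, ⟨q, q', hq1.le, hq2'.le, rfl⟩, t, h, hq2, hq1', rfl⟩
          · rintro ⟨W, ⟨q, q', hq, hq', rfl⟩, hx⟩
            exact mSeg_mono hq hq' hx
        show TopologicalSpace.GenerateOpen S₀ (mSeg G d a c)
        rw [key]
        refine TopologicalSpace.GenerateOpen.sUnion _ ?_
        rintro W ⟨q, q', -, -, rfl⟩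
        exact TopologicalSpace.GenerateOpen.basic _ (Or.inl (Or.inl ⟨d, q, q', rfl⟩))
      · -- stars
        have key : mStar G v ε =
            ⋃₀ {W | ∃ q : ℚ, 0 < q ∧ (q : ℝ) ≤ ε ∧ W = mStar G v q} := by
          ext x
          constructor
          · intro hx
            rcases Set.mem_insert_iff.mp hx with rfl | ⟨d, t, h, hd, ht, rfl⟩
            · obtain ⟨q, hq1, hq2⟩ := exists_rat_btwn hε
              exact ⟨_, ⟨q, by exact_mod_cast hq1, hq2.le, rfl⟩, Set.mem_insert _ _⟩
            · obtain ⟨q, hq1, hq2⟩ := exists_rat_btwn ht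
              exact ⟨_, ⟨q, by exact_mod_cast h.1.trans hq1, hq2.le, rfl⟩,
                Set.mem_insert_iff.mpr (Or.inr ⟨d, t, h, hd, hq1, rfl⟩)⟩
          · rintro ⟨W, ⟨q, hq0, hqε, rfl⟩, hx⟩
            exact mStar_mono hqε hx
        show TopologicalSpace.GenerateOpen S₀ (mStar G v ε)
        rw [key]
        refine TopologicalSpace.GenerateOpen.sUnion _ ?_
        rintro W ⟨q, hq0, -, rfl⟩
        exact TopologicalSpace.GenerateOpen.basic _ (Or.inl (Or.inr ⟨v, q, hq0, rfl⟩))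
      · -- end neighbourhoods
        obtain ⟨q₀, hq₀1, hq₀2⟩ := exists_rat_btwn hε
        have hq₀ : 0 < q₀ := by exact_mod_cast hq₀1
        have key : mEndNbhd G X C ε =
            ⋃₀ {W | ∃ q : ℚ, 0 < q ∧ (q : ℝ) ≤ ε ∧ W = mEndNbhd G X C q} := by
          ext x
          constructor
          · rintro ((hx | hx) | ⟨d, t, h, h1, h2, rfl⟩)
            · exact ⟨_, ⟨q₀, hq₀, hq₀2.le, rfl⟩, Or.inl (Or.inl hx)⟩
            · exact ⟨_, ⟨q₀, hq₀, hq₀2.le, rfl⟩, Or.inl (Or.inr hx)⟩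
            · rcases h2 with h2 | h2
              · exact ⟨_, ⟨q₀, hq₀, hq₀2.le, rfl⟩,
                  Or.inr ⟨d, t, h, h1, Or.inl h2, rfl⟩⟩
              · obtain ⟨q, hq1, hq2⟩ := exists_rat_btwn h2
                exact ⟨_, ⟨q, by exact_mod_cast h.1.trans hq1, hq2.le, rfl⟩,
                  Or.inr ⟨d, t, h, h1, Or.inr hq1, rfl⟩⟩
          · rintro ⟨W, ⟨q, hq0, hqε, rfl⟩, hx⟩
            exact mEndNbhd_mono hqε hx
        show TopologicalSpace.GenerateOpen S₀ (mEndNbhd G X C ε)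
        rw [key]
        refine TopologicalSpace.GenerateOpen.sUnion _ ?_
        rintro W ⟨q, hq0, -, rfl⟩
        exact TopologicalSpace.GenerateOpen.basic _ (Or.inr ⟨X, C, q, hq0, rfl⟩)
end
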